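/- arXiv:2309.06437 — 4 statements merged into one kernel-verified Lean document; each statement's English description precedes it below -/
import Mathlib

section
/- Let d ≥ 1. For every shift τ : ℤ^d → ℤ and every positive integer N, TV(τ_N) ≤ 10d·TV(τ). -/
namespace DF

/-- The base lattice `ℤ^d`. -/
abbrev Base (d : ℕ) := Fin d → ℤ

/-- ℓ¹ distance on the base lattice. -/
def dist1 {d : ℕ} (u v : Base d) : ℤ := ∑ i, |u i - v i|

/-- Nearest-neighbour adjacency on the base lattice. -/
def baseAdj {d : ℕ} (u v : Base d) : Prop := dist1 u v = 1

/-- Edges of the base lattice `ℤ^d`: unordered pairs at ℓ¹-distance 1. -/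
def IsBaseEdge {d : ℕ} (e : Sym2 (Base d)) : Prop :=
  ∃ u v : Base d, baseAdj u v ∧ e = s(u, v)

/-- `|τ u − τ v|` over an unordered pair. -/
def pairAbsDiff {d : ℕ} (τ : Base d → ℤ) : Sym2 (Base d) → ℤ :=
  Sym2.lift ⟨fun u v => |τ u - τ v|, fun _ _ => abs_sub_comm _ _⟩

/-- A shift: a finitely supported `τ : ℤ^d → ℤ`. -/
def IsShift {d : ℕ} (τ : Base d → ℤ) : Prop := {v | τ v ≠ 0}.Finite

/-- Total variation of a shift: the sum of `|τ u − τ v|` over all edges. -/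
noncomputable def TV {d : ℕ} (τ : Base d → ℤ) : ℤ :=
  ∑ᶠ e ∈ {e : Sym2 (Base d) | IsBaseEdge e}, pairAbsDiff τ e

/-- Total variation of `τ` restricted to edges with both endpoints in `A`. -/
noncomputable def TVon {d : ℕ} (τ : Base d → ℤ) (A : Set (Base d)) : ℤ :=
  ∑ᶠ e ∈ {e : Sym2 (Base d) | IsBaseEdge e ∧ ∀ x ∈ e, x ∈ A}, pairAbsDiff τ e

/-- The discrete cube `Q_N(c) = c + {0,1,…,N−1}^d` as a finset. -/
noncomputable def cubeFinset {d : ℕ} (N : ℕ) (c : Base d) : Finset (Base d) :=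
  Fintype.piFinset fun i => Finset.Ico (c i) (c i + (N : ℤ))

/-- The base point `N·⌊u/N⌋` of the cube of side `N` containing `u`. -/
def cubePt {d : ℕ} (N : ℕ) (u : Base d) : Base d := fun i => N * Int.fdiv (u i) N

/-- The average `τ^rough_N(u)` of `τ` over the cube of the partition `𝒫_N`
containing `u`. -/
noncomputable def roughAvg {d : ℕ} (N : ℕ) (τ : Base d → ℤ) (u : Base d) : ℝ :=
  (∑ w ∈ cubeFinset N (cubePt N u), (τ w : ℝ)) / (N : ℝ) ^ d

/-- The integer nearest to `a`, with the convention `[k + 1/2] = k`. -/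
noncomputable def nearestInt (a : ℝ) : ℤ := ⌈a - 1 / 2⌉

/-- The coarse graining `τ_N`. -/
noncomputable def coarse {d : ℕ} (N : ℕ) (τ : Base d → ℤ) (u : Base d) : ℤ :=
  nearestInt (roughAvg N τ u)

end DF
open DF Function Finset

namespace DFAux
variable {d : ℕ}

/-- unit vector -/
def unit (d : ℕ) (i : Fin d) : Base d := Pi.single i 1

lemma unit_apply_self (i : Fin d) : unit d i i = 1 := Pi.single_eq_same i 1

lemma unit_apply_ne {i j : Fin d} (h : j ≠ i) : unit d i j = 0 := Pi.single_eq_of_ne h 1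

lemma add_unit_apply (u : Base d) (i j : Fin d) :
    (u + unit d i) j = if j = i then u j + 1 else u j := by
  by_cases h : j = i <;> simp [h, unit, Pi.single_eq_same, Pi.single_eq_of_ne]

lemma adj_iff {u v : Base d} : baseAdj u v ↔ ∃ i, v = u + unit d i ∨ u = v + unit d i := by
  constructor
  · intro h
    unfold baseAdj dist1 at h
    -- find the coordinate where they differ
    have hnn : ∀ j, (0:ℤ) ≤ |u j - v j| := fun j => abs_nonneg _
    have hex : ∃ i : Fin d, |u i - v i| ≠ 0 := by
      by_contra hc
      push_neg at hc
      simp only [Finset.sum_congr rfl (fun j _ => hc j), Finset.sum_const_zero] at h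
      exact one_ne_zero h.symm
    obtain ⟨i, hi⟩ := hex
    have h1 : |u i - v i| = 1 := by
      have hle : |u i - v i| ≤ 1 := by
        rw [← h]
        exact Finset.single_le_sum (fun j _ => hnn j) (Finset.mem_univ i)
      have : (1:ℤ) ≤ |u i - v i| := by
        rcases (abs_nonneg (u i - v i)).lt_or_eq with h' | h'
        · omega
        · exact absurd h'.symm hi
      omega
    have hrest : ∀ j, j ≠ i → u j = v j := by
      intro j hj
      have : ∑ k ∈ Finset.univ.erase i, |u k - v k| = 0 := by
        have hsplit := Finset.add_sum_erase Finset.univ (fun k => |u k - v k|) (Finset.mem_univ i)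
        rw [h, h1] at hsplit
        linarith
      have hz := (Finset.sum_eq_zero_iff_of_nonneg (fun k _ => hnn k)).mp this j
        (Finset.mem_erase.mpr ⟨hj, Finset.mem_univ j⟩)
      have := abs_eq_zero.mp hz; omega
    rcases abs_eq (by norm_num : (0:ℤ) ≤ 1) |>.mp h1 with h' | h'
    · refine ⟨i, Or.inr ?_⟩
      funext j
      rw [add_unit_apply]
      by_cases hj : j = i
      · subst hj; omega
      · simp [hj, hrest j hj]
    · refine ⟨i, Or.inl ?_⟩
      funext j
      rw [add_unit_apply]
      by_cases hj : j = i
      · subst hj; omega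
      · simp [hj, (hrest j hj).symm]
  · rintro ⟨i, h | h⟩ <;> subst h <;>
    · unfold baseAdj dist1
      rw [Finset.sum_eq_single i]
      · rw [add_unit_apply]; simp
      · intro j _ hj; rw [add_unit_apply]; simp [hj]
      · simp

/-- pairs encode edges -/
def emb (d : ℕ) : Base d × Fin d → Sym2 (Base d) := fun p => s(p.1, p.1 + unit d p.2)

lemma self_ne_add_unit (u : Base d) (i : Fin d) : u ≠ u + unit d i := by
  intro h
  have := congrFun h i
  rw [add_unit_apply] at this
  simp at this

lemma emb_injective : Injective (emb d) := by
  rintro ⟨a, i⟩ ⟨b, j⟩ h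
  simp only [emb] at h
  rw [Sym2.eq_iff] at h
  rcases h with ⟨h1, h2⟩ | ⟨h1, h2⟩
  · subst h1
    by_cases hij : i = j
    · exact Prod.ext rfl hij
    · have := congrFun h2 i
      rw [add_unit_apply, add_unit_apply] at this
      simp [hij] at this
  · -- a = b + unit j and b = a + unit i : contradiction
    exfalso
    have : a = a + unit d i + unit d j := by rw [← h2] at h1; exact h1
    have hi := congrFun this i
    rw [add_unit_apply, add_unit_apply] at hi
    by_cases hij : i = j <;> simp [hij] at hi <;> omega

lemma range_emb : Set.range (emb d) = {e : Sym2 (Base d) | IsBaseEdge e} := by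
  ext e
  constructor
  · rintro ⟨⟨u, i⟩, rfl⟩
    exact ⟨u, u + unit d i, adj_iff.mpr ⟨i, Or.inl rfl⟩, rfl⟩
  · rintro ⟨u, v, hadj, rfl⟩
    rcases adj_iff.mp hadj with ⟨i, h | h⟩
    · exact ⟨(u, i), by simp [emb, ← h]⟩
    · exact ⟨(v, i), by simp [emb, ← h, Sym2.eq_swap]⟩

/-- TV as a finsum over (lower endpoint, direction) pairs. -/
lemma tv_eq_finsum_pairs (g : Base d → ℤ) :
    TV g = ∑ᶠ p : Base d × Fin d, |g (p.1 + unit d p.2) - g p.1| := by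
  unfold TV
  rw [← range_emb, finsum_mem_range emb_injective]
  congr 1
  funext p
  simp [emb, pairAbsDiff, abs_sub_comm]

section Arith
variable {d : ℕ}

/-- membership in own cube -/
lemma mem_cube_self (N : ℕ) (hN : 0 < N) (u : Base d) : u ∈ cubeFinset N (cubePt N u) := by
  rw [cubeFinset, Fintype.mem_piFinset]
  intro i
  rw [Finset.mem_Ico, cubePt]
  have hNz : (N:ℤ) ≠ 0 := by exact_mod_cast hN.ne'
  rw [Int.fdiv_eq_ediv_of_nonneg _ (by positivity)]
  have h1 := Int.mul_ediv_add_emod (u i) N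
  have h2 := Int.emod_nonneg (u i) hNz
  have h3 := Int.emod_lt_of_pos (u i) (by positivity : (0:ℤ) < (N:ℤ))
  omega

/-- points of a cube have the same cubePt -/
lemma cubePt_eq_of_mem (N : ℕ) (hN : 0 < N) {u w : Base d}
    (hw : w ∈ cubeFinset N (cubePt N u)) : cubePt N w = cubePt N u := by
  funext i
  rw [cubeFinset, Fintype.mem_piFinset] at hw
  have hi := hw i
  rw [Finset.mem_Ico, cubePt] at hi
  have hNz : (N:ℤ) ≠ 0 := by exact_mod_cast hN.ne'
  rw [Int.fdiv_eq_ediv_of_nonneg _ (by positivity)] at hi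
  simp only [cubePt]
  rw [Int.fdiv_eq_ediv_of_nonneg _ (by positivity), Int.fdiv_eq_ediv_of_nonneg _ (by positivity)]
  have key : w i / (N:ℤ) = u i / N := by
    have hrw : w i = (w i - N * (u i / N)) + N * (u i / N) := by ring
    rw [hrw, Int.add_mul_ediv_left _ _ hNz,
      Int.ediv_eq_zero_of_lt (by omega) (by omega), zero_add]
  rw [key]

/-- rounding lemma -/
lemma rounding (k S : ℤ) (n : ℕ) (hn : 0 < n) :
    (n:ℤ) * |k - nearestInt ((S:ℝ) / (n:ℝ))| ≤ 2 * |(n:ℤ) * k - S| := by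
  set a : ℝ := (S:ℝ) / (n:ℝ) with ha
  set m : ℤ := nearestInt a with hm
  have hnR : (0:ℝ) < (n:ℝ) := by exact_mod_cast hn
  have hma : |(m:ℝ) - a| ≤ 1/2 := by
    have h1 : a - 1/2 ≤ (m:ℝ) := Int.le_ceil _
    have h2 : (m:ℝ) < a - 1/2 + 1 := Int.ceil_lt_add_one _
    rw [abs_le]; constructor <;> linarith
  have hna : (n:ℝ) * a = (S:ℝ) := by rw [ha]; field_simp
  by_cases hkm : k = m
  · rw [hkm, sub_self, abs_zero, mul_zero]; positivity
  · have hkm1 : (1:ℝ) ≤ |(k:ℝ) - m| := by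
      have : (1:ℤ) ≤ |k - m| := Int.one_le_abs (sub_ne_zero.mpr hkm)
      calc (1:ℝ) = ((1:ℤ):ℝ) := by norm_num
        _ ≤ (|k - m| : ℝ) := by exact_mod_cast this
        _ = |(k:ℝ) - m| := by push_cast; ring_nf
    have key : (n:ℝ) * |(k:ℝ) - m| ≤ 2 * |(n:ℤ) * k - S| := by
      have hka : |(k:ℝ) - m| / 2 ≤ |(k:ℝ) - a| := by
        have := abs_sub_abs_le_abs_sub ((k:ℝ) - a) ((k:ℝ) - m)
        have h2 : |(k:ℝ) - a - ((k:ℝ) - m)| = |(m:ℝ) - a| := by ring_nf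
        rw [h2] at this
        have h3 := abs_sub_abs_le_abs_sub ((k:ℝ) - m) ((k:ℝ) - a)
        have h4 : |(k:ℝ) - m - ((k:ℝ) - a)| = |(m:ℝ) - a| := by
          rw [show (k:ℝ) - m - ((k:ℝ) - a) = -((m:ℝ) - a) by ring, abs_neg]
        rw [h4] at h3
        linarith
      have : (n:ℝ) * |(k:ℝ) - a| = |((n:ℤ) * k - S : ℤ)| := by
        rw [← abs_of_pos hnR, ← abs_mul]
        congr 1
        push_cast
        rw [mul_sub, hna]
      nlinarith [abs_nonneg ((k:ℝ) - a), abs_nonneg (((n:ℤ) * k - S : ℤ):ℝ)]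
    exact_mod_cast key

/-- telescoping bound in one variable -/
lemma oneDim (g : ℤ → ℤ) (a : ℤ) (n : ℕ) {t t' : ℤ}
    (ht : t ∈ Finset.Ico a (a + (n:ℤ))) (ht' : t' ∈ Finset.Ico a (a + (n:ℤ))) :
    |g t - g t'| ≤ ∑ s ∈ Finset.Ico a (a + (n:ℤ) - 1), |g (s + 1) - g s| := by
  rw [Finset.mem_Ico] at ht ht'
  -- wlog t ≤ t'
  have main : ∀ x y : ℤ, a ≤ x → y < a + n → x ≤ y →
      |g y - g x| ≤ ∑ s ∈ Finset.Ico a (a + (n:ℤ) - 1), |g (s + 1) - g s| := by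
    intro x y hx hy hxy
    have step : ∀ z : ℤ, x ≤ z → |g z - g x| ≤ ∑ s ∈ Finset.Ico x z, |g (s + 1) - g s| := by
      refine Int.le_induction ?_ ?_
      · simp
      · intro w hw ih
        rw [show Finset.Ico x (w + 1) = insert w (Finset.Ico x w) from by
            ext z; simp only [Finset.mem_Ico, Finset.mem_insert]; omega,
          Finset.sum_insert (by simp [Finset.mem_Ico])]
        calc |g (w + 1) - g x| ≤ |g (w + 1) - g w| + |g w - g x| := abs_sub_le _ _ _
          _ ≤ |g (w + 1) - g w| + ∑ s ∈ Finset.Ico x w, |g (s + 1) - g s| := by linarith [ih]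
          _ = _ := by ring
    calc |g y - g x| ≤ ∑ s ∈ Finset.Ico x y, |g (s + 1) - g s| := step y hxy
      _ ≤ ∑ s ∈ Finset.Ico a (a + (n:ℤ) - 1), |g (s + 1) - g s| := by
          apply Finset.sum_le_sum_of_subset_of_nonneg
          · apply Finset.Ico_subset_Ico <;> omega
          · intros; positivity
  rcases le_total t t' with h | h
  · rw [abs_sub_comm]; exact main t t' (by omega) (by omega) h
  · exact main t' t (by omega) (by omega) h

end Arith
section Peel
variable {d : ℕ}

/-- Peeling one coordinate off a product box sum. -/
lemma peel (f f' : Fin d → Finset ℤ) (k : Fin d) (b : ℤ) (I' : Finset ℤ)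
    (hfk : f k = I') (hk : f' k = {b}) (hne : ∀ i, i ≠ k → f' i = f i)
    (F F' : Finset (Base d)) (hF : F = Fintype.piFinset f) (hF' : F' = Fintype.piFinset f')
    (g : Base d → ℤ) :
    ∑ u ∈ F, g u = ∑ t ∈ I', ∑ u ∈ F', g (Function.update u k t) := by
  subst hF hF' hfk
  rw [← Finset.sum_product']
  refine Finset.sum_nbij' (i := fun u => (u k, Function.update u k b))
    (j := fun p => Function.update p.2 k p.1) ?_ ?_ ?_ ?_ ?_
  · intro u hu
    rw [Fintype.mem_piFinset] at hu
    rw [Finset.mem_product]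
    refine ⟨hu k, ?_⟩
    rw [Fintype.mem_piFinset]
    intro i
    dsimp only
    by_cases hik : i = k
    · subst hik; rw [Function.update_self, hk]; exact Finset.mem_singleton_self b
    · rw [Function.update_of_ne hik, hne i hik]; exact hu i
  · intro p hp
    rw [Finset.mem_product, Fintype.mem_piFinset] at hp
    rw [Fintype.mem_piFinset]
    intro i
    by_cases hik : i = k
    · subst hik; rw [Function.update_self]; exact hp.1
    · rw [Function.update_of_ne hik, ← hne i hik]; exact hp.2 i
  · intro u hu
    funext i
    dsimp only
    by_cases hik : i = k
    · subst hik; rw [Function.update_self]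
    · rw [Function.update_of_ne hik, Function.update_of_ne hik]
  · intro p hp
    rw [Finset.mem_product, Fintype.mem_piFinset] at hp
    have hpk : p.2 k = b := by
      have := hp.2 k; rw [hk, Finset.mem_singleton] at this; exact this
    have h2 : Function.update (Function.update p.2 k p.1) k b = p.2 := by
      funext i
      by_cases hik : i = k
      · subst hik; rw [Function.update_self, hpk]
      · rw [Function.update_of_ne hik, Function.update_of_ne hik]
    rw [Function.update_self, h2]
  · intro u hu
    congr 1
    funext i
    dsimp only
    by_cases hik : i = k
    · subst hik; rw [Function.update_self]
    · rw [Function.update_of_ne hik, Function.update_of_ne hik]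

lemma card_ico_N (a : ℤ) (N : ℕ) : (Finset.Ico a (a + (N:ℤ))).card = N := by
  rw [Int.card_Ico]; simp

lemma update_succ_eq_add_unit (u : Base d) (k : Fin d) (t : ℤ) :
    Function.update u k (t + 1) = Function.update u k t + unit d k := by
  funext j
  rw [add_unit_apply]
  by_cases hj : j = k
  · subst hj; rw [Function.update_self]; simp [Function.update_self]
  · rw [Function.update_of_ne hj]; simp [hj, Function.update_of_ne hj]

lemma update_add_unit_ne {j k : Fin d} (h : j ≠ k) (u : Base d) (t : ℤ) :
    Function.update (u + unit d j) k t = Function.update u k t + unit d j := by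
  funext i
  rw [add_unit_apply]
  by_cases hik : i = k
  · subst hik
    rw [Function.update_self]
    simp [Function.update_self, Ne.symm h]
  · rw [Function.update_of_ne hik, add_unit_apply, Function.update_of_ne hik]

end Peel
section Main
variable {d : ℕ}

/-- partial cube: coordinates in `s` range over the cube interval, others pinned to `x`. -/
noncomputable def pc (N : ℕ) (c : Base d) (s : Finset (Fin d)) (x : Base d) : Finset (Base d) :=
  Fintype.piFinset fun i => if i ∈ s then Finset.Ico (c i) (c i + (N:ℤ)) else {x i}

/-- lower endpoints of direction-`k` interior edges of the partial cube. -/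
noncomputable def pe (N : ℕ) (c : Base d) (s : Finset (Fin d)) (x : Base d) (k : Fin d) : Finset (Base d) :=
  Fintype.piFinset fun i => if i = k then Finset.Ico (c i) (c i + (N:ℤ) - 1)
    else if i ∈ s then Finset.Ico (c i) (c i + (N:ℤ)) else {x i}

lemma pc_empty (N : ℕ) (c : Base d) (x : Base d) : pc N c ∅ x = {x} := by
  ext u
  simp [pc, Fintype.mem_piFinset, funext_iff, Finset.mem_singleton, eq_comm]

lemma mainG (N : ℕ) (hN : 0 < N) (c : Base d) (s : Finset (Fin d)) :
    ∀ (τ : Base d → ℤ) (x : Base d),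
    ∑ u ∈ pc N c s x, |(N:ℤ)^s.card * τ u - ∑ w ∈ pc N c s x, τ w|
      ≤ (N:ℤ)^(s.card+1) * ∑ k ∈ s, ∑ w ∈ pe N c s x k, |τ (w + unit d k) - τ w| := by
  induction s using Finset.induction_on with
  | empty =>
    intro τ x
    simp [pc_empty]
  | @insert k s' hk ih =>
    intro τ x
    have hkj : ∀ j ∈ s', k ≠ j := fun j hj hkj => hk (hkj ▸ hj)
    set m := s'.card with hm
    have hcard : (insert k s').card = m + 1 := Finset.card_insert_of_notMem hk
    set I := Finset.Ico (c k) (c k + (N:ℤ)) with hI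
    set Ish := Finset.Ico (c k) (c k + (N:ℤ) - 1) with hIsh
    have hcardI : I.card = N := card_ico_N _ _
    have hNnn : (0:ℤ) ≤ (N:ℤ) := by positivity
    -- peel identities
    have P1 : ∀ g : Base d → ℤ, ∑ u ∈ pc N c (insert k s') x, g u
        = ∑ t ∈ I, ∑ u ∈ pc N c s' x, g (Function.update u k t) := by
      intro g
      refine peel
        (fun i => if i ∈ insert k s' then Finset.Ico (c i) (c i + (N:ℤ)) else {x i})
        (fun i => if i ∈ s' then Finset.Ico (c i) (c i + (N:ℤ)) else {x i})
        k (x k) I ?_ ?_ ?_ _ _ rfl rfl g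
      · rw [if_pos (Finset.mem_insert_self k s')]
      · rw [if_neg hk]
      · intro i hi
        simp only [Finset.mem_insert]
        by_cases his : i ∈ s' <;> simp [his, hi]
    have P2 : ∀ g : Base d → ℤ, ∑ w ∈ pe N c (insert k s') x k, g w
        = ∑ t ∈ Ish, ∑ u ∈ pc N c s' x, g (Function.update u k t) := by
      intro g
      refine peel
        (fun i => if i = k then Finset.Ico (c i) (c i + (N:ℤ) - 1)
          else if i ∈ insert k s' then Finset.Ico (c i) (c i + (N:ℤ)) else {x i})
        (fun i => if i ∈ s' then Finset.Ico (c i) (c i + (N:ℤ)) else {x i})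
        k (x k) Ish ?_ ?_ ?_ _ _ rfl rfl g
      · rw [if_pos rfl]
      · rw [if_neg hk]
      · intro i hi
        simp only [Finset.mem_insert, if_neg hi]
        by_cases his : i ∈ s' <;> simp [his, hi]
    have P3 : ∀ j ∈ s', ∀ g : Base d → ℤ, ∑ w ∈ pe N c (insert k s') x j, g w
        = ∑ t ∈ I, ∑ w ∈ pe N c s' x j, g (Function.update w k t) := by
      intro j hj g
      refine peel
        (fun i => if i = j then Finset.Ico (c i) (c i + (N:ℤ) - 1)
          else if i ∈ insert k s' then Finset.Ico (c i) (c i + (N:ℤ)) else {x i})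
        (fun i => if i = j then Finset.Ico (c i) (c i + (N:ℤ) - 1)
          else if i ∈ s' then Finset.Ico (c i) (c i + (N:ℤ)) else {x i})
        k (x k) I ?_ ?_ ?_ _ _ rfl rfl g
      · rw [if_neg (hkj j hj), if_pos (Finset.mem_insert_self k s')]
      · rw [if_neg (hkj j hj), if_neg hk]
      · intro i hi
        by_cases hij : i = j
        · simp [hij]
        · simp only [if_neg hij, Finset.mem_insert]
          by_cases his : i ∈ s' <;> simp [his, hi]
    -- the fiber sum
    set τ' : Base d → ℤ := fun u => ∑ t ∈ I, τ (Function.update u k t) with hτ'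
    set S : ℤ := ∑ w ∈ pc N c (insert k s') x, τ w with hS
    have hSS : S = ∑ w ∈ pc N c s' x, τ' w := by
      rw [hS, P1 τ, Finset.sum_comm]
    -- triangle inequality pointwise
    have tri : ∀ t ∈ I, ∀ u ∈ pc N c s' x,
        |(N:ℤ)^(m+1) * τ (Function.update u k t) - S|
          ≤ (N:ℤ)^m * |(N:ℤ) * τ (Function.update u k t) - τ' u|
            + |(N:ℤ)^m * τ' u - S| := by
      intro t _ u _
      have h1 : (N:ℤ)^(m+1) * τ (Function.update u k t) - S
          = (N:ℤ)^m * ((N:ℤ) * τ (Function.update u k t) - τ' u)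
            + ((N:ℤ)^m * τ' u - S) := by ring
      rw [h1]
      refine (abs_add_le _ _).trans ?_
      rw [abs_mul, abs_of_nonneg (pow_nonneg hNnn m)]
    -- fiber bound
    have T1 : ∀ u ∈ pc N c s' x, ∀ t ∈ I,
        |(N:ℤ) * τ (Function.update u k t) - τ' u|
          ≤ (N:ℤ) * ∑ sh ∈ Ish,
              |τ (Function.update u k (sh+1)) - τ (Function.update u k sh)| := by
      intro u hu t ht
      have hNmul : (N:ℤ) * τ (Function.update u k t)
          = ∑ _t' ∈ I, τ (Function.update u k t) := by
        rw [Finset.sum_const, hcardI, nsmul_eq_mul]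
      calc |(N:ℤ) * τ (Function.update u k t) - τ' u|
          = |∑ t' ∈ I, (τ (Function.update u k t) - τ (Function.update u k t'))| := by
            rw [Finset.sum_sub_distrib, ← hNmul]
        _ ≤ ∑ t' ∈ I, |τ (Function.update u k t) - τ (Function.update u k t')| :=
            Finset.abs_sum_le_sum_abs _ _
        _ ≤ ∑ _t' ∈ I, ∑ sh ∈ Ish,
              |τ (Function.update u k (sh+1)) - τ (Function.update u k sh)| := by
            refine Finset.sum_le_sum fun t' ht' => ?_
            exact oneDim (fun z => τ (Function.update u k z)) (c k) N ht ht'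
        _ = (N:ℤ) * ∑ sh ∈ Ish,
              |τ (Function.update u k (sh+1)) - τ (Function.update u k sh)| := by
            rw [Finset.sum_const, hcardI, nsmul_eq_mul]
    -- bound for τ' differences
    have T2 : ∀ j ∈ s', ∀ w : Base d, |τ' (w + unit d j) - τ' w|
        ≤ ∑ t ∈ I, |τ (Function.update w k t + unit d j) - τ (Function.update w k t)| := by
      intro j hj w
      have hupd : ∀ t : ℤ, Function.update (w + unit d j) k t
          = Function.update w k t + unit d j :=
        fun t => update_add_unit_ne (Ne.symm (hkj j hj)) w t
      calc |τ' (w + unit d j) - τ' w|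
          = |∑ t ∈ I, (τ (Function.update w k t + unit d j) - τ (Function.update w k t))| := by
            rw [Finset.sum_sub_distrib]
            simp only [hτ', hupd]
        _ ≤ _ := Finset.abs_sum_le_sum_abs _ _
    -- main chain
    rw [hcard]
    calc ∑ u ∈ pc N c (insert k s') x, |(N:ℤ)^(m+1) * τ u - S|
        = ∑ t ∈ I, ∑ u ∈ pc N c s' x, |(N:ℤ)^(m+1) * τ (Function.update u k t) - S| :=
          P1 _
      _ ≤ ∑ t ∈ I, ∑ u ∈ pc N c s' x,
            ((N:ℤ)^m * |(N:ℤ) * τ (Function.update u k t) - τ' u|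
              + |(N:ℤ)^m * τ' u - S|) := by
          refine Finset.sum_le_sum fun t ht => Finset.sum_le_sum fun u hu => tri t ht u hu
      _ = (∑ t ∈ I, ∑ u ∈ pc N c s' x, (N:ℤ)^m * |(N:ℤ) * τ (Function.update u k t) - τ' u|)
          + ∑ t ∈ I, ∑ u ∈ pc N c s' x, |(N:ℤ)^m * τ' u - S| := by
          rw [← Finset.sum_add_distrib]
          refine Finset.sum_congr rfl fun t _ => ?_
          rw [← Finset.sum_add_distrib]
      _ ≤ ((N:ℤ)^(m+2) * ∑ w ∈ pe N c (insert k s') x k, |τ (w + unit d k) - τ w|)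
          + (N:ℤ)^(m+2) * ∑ j ∈ s', ∑ w ∈ pe N c (insert k s') x j,
              |τ (w + unit d j) - τ w| := by
          gcongr ?_ + ?_
          · -- part A
            calc ∑ t ∈ I, ∑ u ∈ pc N c s' x,
                  (N:ℤ)^m * |(N:ℤ) * τ (Function.update u k t) - τ' u|
                ≤ ∑ t ∈ I, ∑ u ∈ pc N c s' x, (N:ℤ)^m * ((N:ℤ) * ∑ sh ∈ Ish,
                    |τ (Function.update u k (sh+1)) - τ (Function.update u k sh)|) := by
                  refine Finset.sum_le_sum fun t ht => Finset.sum_le_sum fun u hu => ?_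
                  exact mul_le_mul_of_nonneg_left (T1 u hu t ht) (pow_nonneg hNnn m)
              _ = (N:ℤ)^(m+2) * ∑ u ∈ pc N c s' x, ∑ sh ∈ Ish,
                    |τ (Function.update u k (sh+1)) - τ (Function.update u k sh)| := by
                  rw [Finset.sum_const, hcardI, nsmul_eq_mul, Finset.mul_sum, Finset.mul_sum]
                  exact Finset.sum_congr rfl fun u _ => by ring
              _ = (N:ℤ)^(m+2) * ∑ sh ∈ Ish, ∑ u ∈ pc N c s' x,
                    |τ (Function.update u k (sh+1)) - τ (Function.update u k sh)| := by
                  rw [Finset.sum_comm]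
              _ = (N:ℤ)^(m+2) * ∑ w ∈ pe N c (insert k s') x k,
                    |τ (w + unit d k) - τ w| := by
                  rw [P2 (fun w => |τ (w + unit d k) - τ w|)]
                  refine congrArg (fun z => (N:ℤ)^(m+2) * z) ?_
                  refine Finset.sum_congr rfl fun sh _ => Finset.sum_congr rfl fun u _ => ?_
                  rw [update_succ_eq_add_unit]
          · -- part B
            calc ∑ t ∈ I, ∑ u ∈ pc N c s' x, |(N:ℤ)^m * τ' u - S|
                = (N:ℤ) * ∑ u ∈ pc N c s' x, |(N:ℤ)^m * τ' u
                    - ∑ w ∈ pc N c s' x, τ' w| := by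
                  rw [Finset.sum_const, hcardI, nsmul_eq_mul, ← hSS]
              _ ≤ (N:ℤ) * ((N:ℤ)^(m+1) * ∑ j ∈ s', ∑ w ∈ pe N c s' x j,
                    |τ' (w + unit d j) - τ' w|) :=
                  mul_le_mul_of_nonneg_left (ih τ' x) hNnn
              _ ≤ (N:ℤ) * ((N:ℤ)^(m+1) * ∑ j ∈ s', ∑ w ∈ pe N c s' x j,
                    ∑ t ∈ I, |τ (Function.update w k t + unit d j)
                      - τ (Function.update w k t)|) := by
                  refine mul_le_mul_of_nonneg_left (mul_le_mul_of_nonneg_left ?_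
                    (pow_nonneg hNnn (m+1))) hNnn
                  refine Finset.sum_le_sum fun j hj => Finset.sum_le_sum fun w hw => ?_
                  exact T2 j hj w
              _ = (N:ℤ)^(m+2) * ∑ j ∈ s', ∑ w ∈ pe N c (insert k s') x j,
                    |τ (w + unit d j) - τ w| := by
                  have hz : ∑ j ∈ s', ∑ w ∈ pe N c s' x j, ∑ t ∈ I,
                        |τ (Function.update w k t + unit d j) - τ (Function.update w k t)|
                      = ∑ j ∈ s', ∑ w ∈ pe N c (insert k s') x j,
                        |τ (w + unit d j) - τ w| := by
                    refine Finset.sum_congr rfl fun j hj => ?_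
                    rw [P3 j hj (fun w => |τ (w + unit d j) - τ w|), Finset.sum_comm]
                  rw [hz]; ring
      _ = (N:ℤ)^(m+1+1) * ∑ j ∈ insert k s', ∑ w ∈ pe N c (insert k s') x j,
            |τ (w + unit d j) - τ w| := by
          rw [Finset.sum_insert hk]; ring
end Main
section Face
variable {d : ℕ}

lemma pc_univ (N : ℕ) (c : Base d) (x : Base d) :
    pc N c Finset.univ x = cubeFinset N c := by
  unfold pc cubeFinset
  congr 1
  funext i
  simp

lemma faceL (N : ℕ) (hN : 0 < N) (c : Base d) (k : Fin d) (x : Base d)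
    (hx : ∀ i, x i ∈ Finset.Ico (c i) (c i + (N:ℤ))) (τ : Base d → ℤ) :
    ∑ u ∈ pc N c (Finset.univ.erase k) x, |(N:ℤ)^d * τ u - ∑ w ∈ cubeFinset N c, τ w|
      ≤ (N:ℤ)^d * ∑ j : Fin d, ∑ w ∈ pe N c Finset.univ x j, |τ (w + unit d j) - τ w| := by
  set m := (Finset.univ.erase k).card with hm
  have hd1 : m + 1 = d := by
    rw [hm, Finset.card_erase_of_mem (Finset.mem_univ k), Finset.card_univ, Fintype.card_fin]
    have : 0 < d := k.pos
    omega
  set I := Finset.Ico (c k) (c k + (N:ℤ)) with hI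
  set Ish := Finset.Ico (c k) (c k + (N:ℤ) - 1) with hIsh
  have hcardI : I.card = N := card_ico_N _ _
  have hNnn : (0:ℤ) ≤ (N:ℤ) := by positivity
  -- peel identities
  have P1 : ∀ g : Base d → ℤ, ∑ u ∈ pc N c Finset.univ x, g u
      = ∑ t ∈ I, ∑ u ∈ pc N c (Finset.univ.erase k) x, g (Function.update u k t) := by
    intro g
    refine peel
      (fun i => if i ∈ (Finset.univ : Finset (Fin d)) then Finset.Ico (c i) (c i + (N:ℤ)) else {x i})
      (fun i => if i ∈ Finset.univ.erase k then Finset.Ico (c i) (c i + (N:ℤ)) else {x i})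
      k (x k) I ?_ ?_ ?_ _ _ rfl rfl g
    · rw [if_pos (Finset.mem_univ k)]
    · rw [if_neg (by simp)]
    · intro i hi
      simp [Finset.mem_erase, hi]
  have P2 : ∀ g : Base d → ℤ, ∑ w ∈ pe N c Finset.univ x k, g w
      = ∑ t ∈ Ish, ∑ u ∈ pc N c (Finset.univ.erase k) x, g (Function.update u k t) := by
    intro g
    refine peel
      (fun i => if i = k then Finset.Ico (c i) (c i + (N:ℤ) - 1)
        else if i ∈ (Finset.univ : Finset (Fin d)) then Finset.Ico (c i) (c i + (N:ℤ)) else {x i})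
      (fun i => if i ∈ Finset.univ.erase k then Finset.Ico (c i) (c i + (N:ℤ)) else {x i})
      k (x k) Ish ?_ ?_ ?_ _ _ rfl rfl g
    · rw [if_pos rfl]
    · rw [if_neg (by simp)]
    · intro i hi
      simp [Finset.mem_erase, hi]
  have P3 : ∀ j, j ≠ k → ∀ g : Base d → ℤ, ∑ w ∈ pe N c Finset.univ x j, g w
      = ∑ t ∈ I, ∑ w ∈ pe N c (Finset.univ.erase k) x j, g (Function.update w k t) := by
    intro j hjk g
    refine peel
      (fun i => if i = j then Finset.Ico (c i) (c i + (N:ℤ) - 1)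
        else if i ∈ (Finset.univ : Finset (Fin d)) then Finset.Ico (c i) (c i + (N:ℤ)) else {x i})
      (fun i => if i = j then Finset.Ico (c i) (c i + (N:ℤ) - 1)
        else if i ∈ Finset.univ.erase k then Finset.Ico (c i) (c i + (N:ℤ)) else {x i})
      k (x k) I ?_ ?_ ?_ _ _ rfl rfl g
    · rw [if_neg (Ne.symm hjk), if_pos (Finset.mem_univ k)]
    · rw [if_neg (Ne.symm hjk), if_neg (by simp)]
    · intro i hi
      by_cases hij : i = j
      · simp [hij]
      · simp [hij, Finset.mem_erase, hi]
  set τ' : Base d → ℤ := fun u => ∑ t ∈ I, τ (Function.update u k t) with hτ'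
  set S : ℤ := ∑ w ∈ cubeFinset N c, τ w with hS
  have hSS : S = ∑ w ∈ pc N c (Finset.univ.erase k) x, τ' w := by
    rw [hS, ← pc_univ N c x, P1 τ, Finset.sum_comm]
  have hself : ∀ u ∈ pc N c (Finset.univ.erase k) x, Function.update u k (x k) = u := by
    intro u hu
    have huk : u k = x k := by
      rw [pc, Fintype.mem_piFinset] at hu
      have := hu k
      rw [if_neg (by simp)] at this
      exact Finset.mem_singleton.mp this
    rw [← huk, Function.update_eq_self]
  -- fiber bound at the pinned point
  have T1 : ∀ u ∈ pc N c (Finset.univ.erase k) x,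
      |(N:ℤ) * τ u - τ' u|
        ≤ (N:ℤ) * ∑ sh ∈ Ish,
            |τ (Function.update u k (sh+1)) - τ (Function.update u k sh)| := by
    intro u hu
    have hNmul : (N:ℤ) * τ u = ∑ _t' ∈ I, τ u := by
      rw [Finset.sum_const, hcardI, nsmul_eq_mul]
    calc |(N:ℤ) * τ u - τ' u|
        = |∑ t' ∈ I, (τ u - τ (Function.update u k t'))| := by
          rw [Finset.sum_sub_distrib, ← hNmul]
      _ ≤ ∑ t' ∈ I, |τ u - τ (Function.update u k t')| := Finset.abs_sum_le_sum_abs _ _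
      _ ≤ ∑ _t' ∈ I, ∑ sh ∈ Ish,
            |τ (Function.update u k (sh+1)) - τ (Function.update u k sh)| := by
          refine Finset.sum_le_sum fun t' ht' => ?_
          have := oneDim (fun z => τ (Function.update u k z)) (c k) N (hx k) ht'
          rw [hself u hu] at this
          exact this
      _ = (N:ℤ) * ∑ sh ∈ Ish,
            |τ (Function.update u k (sh+1)) - τ (Function.update u k sh)| := by
          rw [Finset.sum_const, hcardI, nsmul_eq_mul]
  have T2 : ∀ j ∈ Finset.univ.erase k, ∀ w : Base d, |τ' (w + unit d j) - τ' w|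
      ≤ ∑ t ∈ I, |τ (Function.update w k t + unit d j) - τ (Function.update w k t)| := by
    intro j hj w
    have hjk : j ≠ k := (Finset.mem_erase.mp hj).1
    have hupd : ∀ t : ℤ, Function.update (w + unit d j) k t
        = Function.update w k t + unit d j := fun t => update_add_unit_ne hjk w t
    calc |τ' (w + unit d j) - τ' w|
        = |∑ t ∈ I, (τ (Function.update w k t + unit d j) - τ (Function.update w k t))| := by
          rw [Finset.sum_sub_distrib]
          simp only [hτ', hupd]
      _ ≤ _ := Finset.abs_sum_le_sum_abs _ _
  -- main chain
  have hpow : (N:ℤ)^d = (N:ℤ)^(m+1) := by rw [hd1]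
  rw [hpow]
  calc ∑ u ∈ pc N c (Finset.univ.erase k) x, |(N:ℤ)^(m+1) * τ u - S|
      ≤ ∑ u ∈ pc N c (Finset.univ.erase k) x,
          ((N:ℤ)^m * |(N:ℤ) * τ u - τ' u| + |(N:ℤ)^m * τ' u - S|) := by
        refine Finset.sum_le_sum fun u hu => ?_
        have h1 : (N:ℤ)^(m+1) * τ u - S
            = (N:ℤ)^m * ((N:ℤ) * τ u - τ' u) + ((N:ℤ)^m * τ' u - S) := by ring
        rw [h1]
        refine (abs_add_le _ _).trans ?_
        rw [abs_mul, abs_of_nonneg (pow_nonneg hNnn m)]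
    _ = (∑ u ∈ pc N c (Finset.univ.erase k) x, (N:ℤ)^m * |(N:ℤ) * τ u - τ' u|)
        + ∑ u ∈ pc N c (Finset.univ.erase k) x, |(N:ℤ)^m * τ' u - S| := by
        rw [← Finset.sum_add_distrib]
    _ ≤ ((N:ℤ)^(m+1) * ∑ w ∈ pe N c Finset.univ x k, |τ (w + unit d k) - τ w|)
        + (N:ℤ)^(m+1) * ∑ j ∈ Finset.univ.erase k, ∑ w ∈ pe N c Finset.univ x j,
            |τ (w + unit d j) - τ w| := by
        gcongr ?_ + ?_
        · calc ∑ u ∈ pc N c (Finset.univ.erase k) x, (N:ℤ)^m * |(N:ℤ) * τ u - τ' u|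
              ≤ ∑ u ∈ pc N c (Finset.univ.erase k) x, (N:ℤ)^m * ((N:ℤ) * ∑ sh ∈ Ish,
                  |τ (Function.update u k (sh+1)) - τ (Function.update u k sh)|) := by
                refine Finset.sum_le_sum fun u hu => ?_
                exact mul_le_mul_of_nonneg_left (T1 u hu) (pow_nonneg hNnn m)
            _ = (N:ℤ)^(m+1) * ∑ u ∈ pc N c (Finset.univ.erase k) x, ∑ sh ∈ Ish,
                  |τ (Function.update u k (sh+1)) - τ (Function.update u k sh)| := by
                rw [Finset.mul_sum]
                exact Finset.sum_congr rfl fun u _ => by ring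
            _ = (N:ℤ)^(m+1) * ∑ sh ∈ Ish, ∑ u ∈ pc N c (Finset.univ.erase k) x,
                  |τ (Function.update u k (sh+1)) - τ (Function.update u k sh)| := by
                rw [Finset.sum_comm]
            _ = (N:ℤ)^(m+1) * ∑ w ∈ pe N c Finset.univ x k, |τ (w + unit d k) - τ w| := by
                rw [P2 (fun w => |τ (w + unit d k) - τ w|)]
                refine congrArg (fun z => (N:ℤ)^(m+1) * z) ?_
                refine Finset.sum_congr rfl fun sh _ => Finset.sum_congr rfl fun u _ => ?_
                rw [update_succ_eq_add_unit]
        · calc ∑ u ∈ pc N c (Finset.univ.erase k) x, |(N:ℤ)^m * τ' u - S|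
              = ∑ u ∈ pc N c (Finset.univ.erase k) x, |(N:ℤ)^m * τ' u
                  - ∑ w ∈ pc N c (Finset.univ.erase k) x, τ' w| := by rw [← hSS]
            _ ≤ (N:ℤ)^(m+1) * ∑ j ∈ Finset.univ.erase k,
                  ∑ w ∈ pe N c (Finset.univ.erase k) x j, |τ' (w + unit d j) - τ' w| :=
                mainG N hN c (Finset.univ.erase k) τ' x
            _ ≤ (N:ℤ)^(m+1) * ∑ j ∈ Finset.univ.erase k,
                  ∑ w ∈ pe N c (Finset.univ.erase k) x j, ∑ t ∈ I,
                    |τ (Function.update w k t + unit d j) - τ (Function.update w k t)| := by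
                refine mul_le_mul_of_nonneg_left ?_ (pow_nonneg hNnn (m+1))
                refine Finset.sum_le_sum fun j hj => Finset.sum_le_sum fun w hw => T2 j hj w
            _ = (N:ℤ)^(m+1) * ∑ j ∈ Finset.univ.erase k,
                  ∑ w ∈ pe N c Finset.univ x j, |τ (w + unit d j) - τ w| := by
                refine congrArg (fun z => (N:ℤ)^(m+1) * z) ?_
                refine Finset.sum_congr rfl fun j hj => ?_
                rw [P3 j (Finset.mem_erase.mp hj).1 (fun w => |τ (w + unit d j) - τ w|),
                  Finset.sum_comm]
    _ = (N:ℤ)^(m+1) * ∑ j : Fin d, ∑ w ∈ pe N c Finset.univ x j,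
          |τ (w + unit d j) - τ w| := by
        rw [← Finset.add_sum_erase Finset.univ _ (Finset.mem_univ k)]
        ring

end Face
section Top
variable {d : ℕ}

/-- sum of τ over the cube based at v -/
noncomputable def Sv (N : ℕ) (τ : Base d → ℤ) (v : Base d) : ℤ := ∑ w ∈ cubeFinset N v, τ w

lemma coarse_eq' (N : ℕ) (τ : Base d → ℤ) (u : Base d) :
    coarse N τ u = nearestInt ((Sv N τ (cubePt N u) : ℝ) / ((N^d : ℕ) : ℝ)) := by
  unfold coarse roughAvg Sv
  congr 2
  · push_cast
    rfl
  · push_cast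
    rfl

lemma round_app (N : ℕ) (hN : 0 < N) (τ : Base d → ℤ) (u : Base d) :
    (N:ℤ)^d * |τ u - coarse N τ u|
      ≤ 2 * |(N:ℤ)^d * τ u - Sv N τ (cubePt N u)| := by
  have h := rounding (τ u) (Sv N τ (cubePt N u)) (N^d) (pow_pos hN d)
  rw [coarse_eq']
  push_cast at h ⊢
  exact h

lemma perPair (N : ℕ) (hN : 0 < N) (τ : Base d → ℤ) (u : Base d) (i : Fin d) :
    (N:ℤ)^d * |coarse N τ (u + unit d i) - coarse N τ u|
      ≤ 2 * |(N:ℤ)^d * τ u - Sv N τ (cubePt N u)|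
        + (N:ℤ)^d * |τ (u + unit d i) - τ u|
        + 2 * |(N:ℤ)^d * τ (u + unit d i) - Sv N τ (cubePt N (u + unit d i))| := by
  have t1 := round_app N hN τ u
  have t2 := round_app N hN τ (u + unit d i)
  have hn : (0:ℤ) ≤ (N:ℤ)^d := by positivity
  have tri : |coarse N τ (u + unit d i) - coarse N τ u|
      ≤ |τ u - coarse N τ u| + |τ (u + unit d i) - τ u|
        + |τ (u + unit d i) - coarse N τ (u + unit d i)| := by
    have h1 : coarse N τ (u + unit d i) - coarse N τ u
        = ((τ u - coarse N τ u) + (τ (u + unit d i) - τ u))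
          + (-(τ (u + unit d i) - coarse N τ (u + unit d i))) := by ring
    rw [h1]
    refine (abs_add_le _ _).trans ?_
    rw [abs_neg]
    exact add_le_add (abs_add_le _ _) le_rfl
  have expand : (N:ℤ)^d * |coarse N τ (u + unit d i) - coarse N τ u|
      ≤ (N:ℤ)^d * |τ u - coarse N τ u| + (N:ℤ)^d * |τ (u + unit d i) - τ u|
        + (N:ℤ)^d * |τ (u + unit d i) - coarse N τ (u + unit d i)| := by
    calc (N:ℤ)^d * |coarse N τ (u + unit d i) - coarse N τ u|
        ≤ (N:ℤ)^d * (|τ u - coarse N τ u| + |τ (u + unit d i) - τ u|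
            + |τ (u + unit d i) - coarse N τ (u + unit d i)|) :=
          mul_le_mul_of_nonneg_left tri hn
      _ = _ := by ring
  linarith

lemma ediv_unique (N : ℕ) (hN : 0 < N) (a q : ℤ) (h1 : (N:ℤ)*q ≤ a)
    (h2 : a < (N:ℤ)*q + N) : a / (N:ℤ) = q := by
  have hNz : (N:ℤ) ≠ 0 := by positivity
  have h3 : a = (a - (N:ℤ)*q) + (N:ℤ)*q := by ring
  rw [h3, Int.add_mul_ediv_left _ _ hNz,
    Int.ediv_eq_zero_of_lt (by omega) (by omega), zero_add]

lemma cube_coord (N : ℕ) (hN : 0 < N) (u : Base d) (i : Fin d) :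
    cubePt N u i ≤ u i ∧ u i < cubePt N u i + N := by
  have := mem_cube_self N hN u
  rw [cubeFinset, Fintype.mem_piFinset] at this
  have hi := this i
  rw [Finset.mem_Ico] at hi
  exact hi

lemma bdry (N : ℕ) (hN : 0 < N) {u : Base d} {i : Fin d}
    (h : cubePt N (u + unit d i) ≠ cubePt N u) :
    u i = cubePt N u i + (N:ℤ) - 1 ∧ (u + unit d i) i = cubePt N (u + unit d i) i := by
  have hco := cube_coord N hN u i
  have hNz : (0:ℤ) ≤ (N:ℤ) := by positivity
  have hedv : ∀ a : ℤ, Int.fdiv a (N:ℤ) = a / (N:ℤ) := fun a => Int.fdiv_eq_ediv_of_nonneg a hNz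
  have hq : cubePt N u i = (N:ℤ) * (u i / (N:ℤ)) := by rw [cubePt, hedv]
  have hNq : (N:ℤ) * (u i / (N:ℤ) + 1) = (N:ℤ) * (u i / (N:ℤ)) + (N:ℤ) := by ring
  rw [hq] at hco
  by_cases hcase : u i < (N:ℤ) * (u i / (N:ℤ)) + (N:ℤ) - 1
  · exfalso
    apply h
    funext j
    by_cases hj : j = i
    · subst hj
      show (N:ℤ) * Int.fdiv ((u + unit d j) j) N = (N:ℤ) * Int.fdiv (u j) N
      rw [add_unit_apply, if_pos rfl, hedv, hedv,
        ediv_unique N hN (u j + 1) (u j / (N:ℤ)) (by omega) (by omega)]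
    · show (N:ℤ) * Int.fdiv ((u + unit d i) j) N = (N:ℤ) * Int.fdiv (u j) N
      rw [add_unit_apply, if_neg hj]
  · constructor
    · rw [hq]; omega
    · have h2 : (u + unit d i) i = u i + 1 := by rw [add_unit_apply, if_pos rfl]
      show (u + unit d i) i = (N:ℤ) * Int.fdiv ((u + unit d i) i) N
      rw [h2, hedv, ediv_unique N hN (u i + 1) (u i / (N:ℤ) + 1) (by omega) (by omega)]
      omega

/-- generic sum comparison along an injection -/
lemma genLe {α β : Type*} [DecidableEq α] [DecidableEq β] (F : Finset α) (F' : Finset β)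
    (f : α → ℤ) (g : β → ℤ) (e : α → β) (hinj : Function.Injective e)
    (h0 : ∀ q ∈ F', 0 ≤ g q)
    (h : ∀ p ∈ F, f p ≠ 0 → e p ∈ F' ∧ f p ≤ g (e p)) :
    ∑ p ∈ F, f p ≤ ∑ q ∈ F', g q := by
  classical
  rw [← Finset.sum_filter_ne_zero F (f := f)]
  calc ∑ p ∈ F.filter (fun p => f p ≠ 0), f p
      ≤ ∑ p ∈ F.filter (fun p => f p ≠ 0), g (e p) := by
        refine Finset.sum_le_sum fun p hp => ?_
        have := Finset.mem_filter.mp hp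
        exact (h p this.1 this.2).2
    _ = ∑ q ∈ (F.filter (fun p => f p ≠ 0)).image e, g q :=
        (Finset.sum_image (fun x _ y _ hxy => hinj hxy)).symm
    _ ≤ ∑ q ∈ F', g q := by
        refine Finset.sum_le_sum_of_subset_of_nonneg ?_ (fun q hq _ => h0 q hq)
        intro q hq
        rw [Finset.mem_image] at hq
        obtain ⟨p, hp, rfl⟩ := hq
        have := Finset.mem_filter.mp hp
        exact (h p this.1 this.2).1

end Top
section Top2
variable {d : ℕ}

lemma tv_fin (g : Base d → ℤ) (F : Finset (Base d × Fin d))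
    (hF : ∀ p : Base d × Fin d, |g (p.1 + unit d p.2) - g p.1| ≠ 0 → p ∈ F) :
    TV g = ∑ p ∈ F, |g (p.1 + unit d p.2) - g p.1| := by
  rw [tv_eq_finsum_pairs]
  exact finsum_eq_sum_of_support_subset _ (fun p hp => hF p hp)

lemma nearestInt_zero : nearestInt 0 = 0 := by
  unfold nearestInt
  rw [Int.ceil_eq_zero_iff]
  constructor <;> norm_num

lemma mem_pc_erase (N : ℕ) (v x u : Base d) (i : Fin d) :
    u ∈ pc N v (Finset.univ.erase i) x
      ↔ (u i = x i ∧ ∀ j, j ≠ i → v j ≤ u j ∧ u j < v j + (N:ℤ)) := by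
  rw [pc, Fintype.mem_piFinset]
  constructor
  · intro hmem
    constructor
    · have := hmem i
      rw [if_neg (by simp)] at this
      exact Finset.mem_singleton.mp this
    · intro j hj
      have := hmem j
      rw [if_pos (by simp [Finset.mem_erase, hj])] at this
      exact Finset.mem_Ico.mp this
  · intro ⟨h1, h2⟩ j
    by_cases hj : j = i
    · subst hj
      rw [if_neg (by simp)]
      exact Finset.mem_singleton.mpr h1
    · rw [if_pos (by simp [Finset.mem_erase, hj])]
      exact Finset.mem_Ico.mpr (h2 j hj)

lemma pe_x_irrel (N : ℕ) (c x x' : Base d) (j : Fin d) :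
    pe N c Finset.univ x j = pe N c Finset.univ x' j := by
  unfold pe
  congr 1
  funext i
  simp

lemma mem_cube_iff (N : ℕ) (v u : Base d) :
    u ∈ cubeFinset N v ↔ ∀ j, v j ≤ u j ∧ u j < v j + (N:ℤ) := by
  rw [cubeFinset, Fintype.mem_piFinset]
  simp [Finset.mem_Ico]

lemma cubePt_of_face (N : ℕ) (hN : 0 < N) {v x u : Base d} {i : Fin d}
    (hv : ∃ u₀, v = cubePt N u₀) (hx : v i ≤ x i ∧ x i < v i + (N:ℤ))
    (hu : u ∈ pc N v (Finset.univ.erase i) x) : cubePt N u = v := by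
  obtain ⟨u₀, rfl⟩ := hv
  rw [mem_pc_erase] at hu
  refine cubePt_eq_of_mem N hN ?_
  rw [mem_cube_iff]
  intro j
  by_cases hj : j = i
  · subst hj; rw [hu.1]; exact hx
  · exact hu.2 j hj

lemma cubePt_of_fullE (N : ℕ) (hN : 0 < N) {v w : Base d} {j : Fin d}
    (hv : ∃ u₀, v = cubePt N u₀) (hw : w ∈ pe N v Finset.univ v j) : cubePt N w = v := by
  obtain ⟨u₀, rfl⟩ := hv
  refine cubePt_eq_of_mem N hN ?_
  rw [pe, Fintype.mem_piFinset] at hw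
  rw [mem_cube_iff]
  intro i
  have := hw i
  by_cases hij : i = j
  · rw [if_pos hij, Finset.mem_Ico] at this
    omega
  · rw [if_neg hij, if_pos (Finset.mem_univ i), Finset.mem_Ico] at this
    exact this

end Top2
section Top3
variable {d : ℕ}

/-- edge sum of a cube based at v -/
noncomputable def EQv (N : ℕ) (τ : Base d → ℤ) (v : Base d) : ℤ :=
  ∑ j : Fin d, ∑ w ∈ pe N v Finset.univ v j, |τ (w + unit d j) - τ w|

noncomputable def faceUF (N : ℕ) (v : Base d) (i : Fin d) : Finset (Base d) :=
  pc N v (Finset.univ.erase i) (Function.update v i (v i + (N:ℤ) - 1))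

noncomputable def faceDF (N : ℕ) (v : Base d) (i : Fin d) : Finset (Base d) :=
  pc N v (Finset.univ.erase i) v

lemma mem_faceU (N : ℕ) (hN : 0 < N) {u : Base d} {i : Fin d}
    (hb : cubePt N (u + unit d i) ≠ cubePt N u) : u ∈ faceUF N (cubePt N u) i := by
  rw [faceUF, mem_pc_erase]
  constructor
  · rw [Function.update_self]; exact (bdry N hN hb).1
  · intro j _; exact cube_coord N hN u j

lemma mem_faceD (N : ℕ) (hN : 0 < N) {u : Base d} {i : Fin d}
    (hb : cubePt N (u + unit d i) ≠ cubePt N u) :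
    u + unit d i ∈ faceDF N (cubePt N (u + unit d i)) i := by
  rw [faceDF, mem_pc_erase]
  exact ⟨(bdry N hN hb).2.symm ▸ rfl, fun j _ => cube_coord N hN (u + unit d i) j⟩

lemma xU_mem (N : ℕ) (hN : 0 < N) (v : Base d) (i j : Fin d) :
    Function.update v i (v i + (N:ℤ) - 1) j ∈ Finset.Ico (v j) (v j + (N:ℤ)) := by
  rw [Finset.mem_Ico]
  by_cases hj : j = i
  · subst hj; rw [Function.update_self]; omega
  · rw [Function.update_of_ne hj]; omega

lemma faceU_bound (N : ℕ) (hN : 0 < N) (τ : Base d → ℤ) {v : Base d}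
    (hv : ∃ u₀, v = cubePt N u₀) (i : Fin d) :
    ∑ u ∈ faceUF N v i, |(N:ℤ)^d * τ u - Sv N τ (cubePt N u)|
      ≤ (N:ℤ)^d * EQv N τ v := by
  have hx : ∀ j, Function.update v i (v i + (N:ℤ) - 1) j ∈ Finset.Ico (v j) (v j + (N:ℤ)) :=
    xU_mem N hN v i
  have hcong : ∀ u ∈ faceUF N v i, cubePt N u = v := by
    intro u hu
    refine cubePt_of_face N hN hv ?_ hu
    have h := hx i
    rw [Finset.mem_Ico] at h
    exact h
  calc ∑ u ∈ faceUF N v i, |(N:ℤ)^d * τ u - Sv N τ (cubePt N u)|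
      = ∑ u ∈ faceUF N v i, |(N:ℤ)^d * τ u - Sv N τ v| :=
        Finset.sum_congr rfl fun u hu => by rw [hcong u hu]
    _ ≤ (N:ℤ)^d * ∑ j : Fin d, ∑ w ∈ pe N v Finset.univ
          (Function.update v i (v i + (N:ℤ) - 1)) j, |τ (w + unit d j) - τ w| :=
        faceL N hN v i _ hx τ
    _ = (N:ℤ)^d * EQv N τ v := by
        rw [EQv]
        refine congrArg (fun z => (N:ℤ)^d * z) (Finset.sum_congr rfl fun j _ => ?_)
        rw [pe_x_irrel N v _ v j]

lemma faceD_bound (N : ℕ) (hN : 0 < N) (τ : Base d → ℤ) {v : Base d}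
    (hv : ∃ u₀, v = cubePt N u₀) (i : Fin d) :
    ∑ u ∈ faceDF N v i, |(N:ℤ)^d * τ u - Sv N τ (cubePt N u)|
      ≤ (N:ℤ)^d * EQv N τ v := by
  have hx : ∀ j, v j ∈ Finset.Ico (v j) (v j + (N:ℤ)) := by
    intro j; rw [Finset.mem_Ico]; omega
  have hcong : ∀ u ∈ faceDF N v i, cubePt N u = v := by
    intro u hu
    refine cubePt_of_face N hN hv ?_ hu
    have := hx i
    rw [Finset.mem_Ico] at this
    exact this
  calc ∑ u ∈ faceDF N v i, |(N:ℤ)^d * τ u - Sv N τ (cubePt N u)|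
      = ∑ u ∈ faceDF N v i, |(N:ℤ)^d * τ u - Sv N τ v| :=
        Finset.sum_congr rfl fun u hu => by rw [hcong u hu]
    _ ≤ (N:ℤ)^d * ∑ j : Fin d, ∑ w ∈ pe N v Finset.univ v j, |τ (w + unit d j) - τ w| :=
        faceL N hN v i _ hx τ
    _ = (N:ℤ)^d * EQv N τ v := rfl

/-- Bound a biUnion-of-faces sum. -/
lemma FU_bound (N : ℕ) (hN : 0 < N) (τ : Base d → ℤ) (VV : Finset (Base d))
    (hVV : ∀ v ∈ VV, ∃ u₀, v = cubePt N u₀)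
    (face : Base d → Fin d → Finset (Base d))
    (hface : ∀ v ∈ VV, ∀ i, ∀ u ∈ face v i, cubePt N u = v)
    (hbnd : ∀ v ∈ VV, ∀ i, ∑ u ∈ face v i, |(N:ℤ)^d * τ u - Sv N τ (cubePt N u)|
      ≤ (N:ℤ)^d * EQv N τ v) :
    ∑ q ∈ (VV ×ˢ Finset.univ).biUnion
        (fun vi => (face vi.1 vi.2).image (fun u => (u, vi.2))),
      |(N:ℤ)^d * τ q.1 - Sv N τ (cubePt N q.1)|
      ≤ (N:ℤ)^d * ((d:ℤ) * ∑ v ∈ VV, EQv N τ v) := by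
  have hdisj : ((VV ×ˢ (Finset.univ : Finset (Fin d)) :
        Finset (Base d × Fin d)) : Set (Base d × Fin d)).PairwiseDisjoint
      (fun vi : Base d × Fin d => (face vi.1 vi.2).image (fun u => (u, vi.2))) := by
    intro a ha b hb hab
    simp only [Function.onFun]
    rw [Finset.disjoint_left]
    intro q hqa hqb
    apply hab
    obtain ⟨u, hu, rfl⟩ := Finset.mem_image.mp hqa
    obtain ⟨u', hu', he⟩ := Finset.mem_image.mp hqb
    injection he with h1 h2
    subst h1
    rw [Finset.mem_coe, Finset.mem_product] at ha hb
    have hva : a.1 = cubePt N u' := (hface a.1 ha.1 a.2 u' hu).symm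
    have hvb : b.1 = cubePt N u' := (hface b.1 hb.1 b.2 u' hu').symm
    exact Prod.ext (hva.trans hvb.symm) h2.symm
  rw [Finset.sum_biUnion hdisj]
  calc ∑ vi ∈ VV ×ˢ Finset.univ, ∑ q ∈ (face vi.1 vi.2).image (fun u => (u, vi.2)),
        |(N:ℤ)^d * τ q.1 - Sv N τ (cubePt N q.1)|
      = ∑ vi ∈ VV ×ˢ Finset.univ, ∑ u ∈ face vi.1 vi.2,
        |(N:ℤ)^d * τ u - Sv N τ (cubePt N u)| := by
        refine Finset.sum_congr rfl fun vi _ => ?_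
        rw [Finset.sum_image (fun x _ y _ h => congrArg Prod.fst h)]
    _ ≤ ∑ vi ∈ VV ×ˢ Finset.univ, (N:ℤ)^d * EQv N τ vi.1 := by
        refine Finset.sum_le_sum fun vi hvi => ?_
        rw [Finset.mem_product] at hvi
        exact hbnd vi.1 hvi.1 vi.2
    _ = (N:ℤ)^d * ((d:ℤ) * ∑ v ∈ VV, EQv N τ v) := by
        rw [Finset.sum_product]
        simp only [Finset.sum_const, Finset.card_univ, Fintype.card_fin, nsmul_eq_mul]
        rw [Finset.mul_sum, Finset.mul_sum]
        refine Finset.sum_congr rfl fun v _ => by ring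

/-- cube edge sums as a pair-set sum -/
lemma sum_EQ (N : ℕ) (hN : 0 < N) (τ : Base d → ℤ) (VV : Finset (Base d))
    (hVV : ∀ v ∈ VV, ∃ u₀, v = cubePt N u₀) :
    ∑ v ∈ VV, EQv N τ v
      = ∑ p ∈ VV.biUnion (fun v => Finset.univ.biUnion
          (fun j => (pe N v Finset.univ v j).image (fun w => (w, j)))),
        |τ (p.1 + unit d p.2) - τ p.1| := by
  have hinner : ∀ v ∈ VV, EQv N τ v
      = ∑ p ∈ Finset.univ.biUnion
          (fun j => (pe N v Finset.univ v j).image (fun w : Base d => (w, j))),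
        |τ (p.1 + unit d p.2) - τ p.1| := by
    intro v _
    rw [Finset.sum_biUnion]
    · refine Finset.sum_congr rfl fun j _ => ?_
      rw [Finset.sum_image (fun x _ y _ h => congrArg Prod.fst h)]
    · intro a _ b _ hab
      simp only [Function.onFun]
      rw [Finset.disjoint_left]
      intro q hqa hqb
      apply hab
      obtain ⟨w, _, rfl⟩ := Finset.mem_image.mp hqa
      obtain ⟨w', _, he⟩ := Finset.mem_image.mp hqb
      injection he with h1 h2
      exact h2.symm
  rw [Finset.sum_congr rfl hinner]
  rw [Finset.sum_biUnion]
  intro a ha b hb hab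
  simp only [Function.onFun]
  rw [Finset.disjoint_left]
  intro q hqa hqb
  apply hab
  obtain ⟨j, _, hqj⟩ := Finset.mem_biUnion.mp hqa
  obtain ⟨j', _, hqj'⟩ := Finset.mem_biUnion.mp hqb
  obtain ⟨w, hw, rfl⟩ := Finset.mem_image.mp hqj
  obtain ⟨w', hw', he⟩ := Finset.mem_image.mp hqj'
  injection he with h1 h2
  subst h1
  rw [Finset.mem_coe] at ha hb
  exact (cubePt_of_fullE N hN (hVV a ha) hw).symm.trans (cubePt_of_fullE N hN (hVV b hb) hw')

end Top3
end DFAux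


open DF DFAux

/-- For every shift `τ` and positive integer `N`,
`TV(τ_N) ≤ 10 d TV(τ)`. -/
theorem total_variation_of_coarse_graining
    (d : ℕ) (hd : 1 ≤ d) (τ : Base d → ℤ) (hτ : IsShift τ) (N : ℕ) (hN : 0 < N) :
    TV (coarse N τ) ≤ 10 * d * TV τ := by
  classical
  have hNz : (0:ℤ) < (N:ℤ) := by exact_mod_cast hN
  have hnpos : (0:ℤ) < (N:ℤ)^d := by positivity
  obtain ⟨T, hTmem⟩ : ∃ T : Finset (Base d), ∀ w, τ w ≠ 0 → w ∈ T :=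
    ⟨hτ.toFinset, fun w hw => hτ.mem_toFinset.mpr hw⟩
  -- support pairs for τ
  set Fsupp : Finset (Base d × Fin d) :=
    (T ∪ Finset.univ.biUnion fun i => T.image (fun w => w - unit d i)) ×ˢ Finset.univ
    with hFs
  have hFsupp : ∀ p : Base d × Fin d, |τ (p.1 + unit d p.2) - τ p.1| ≠ 0 → p ∈ Fsupp := by
    intro p hp
    have hne : τ p.1 ≠ 0 ∨ τ (p.1 + unit d p.2) ≠ 0 := by
      by_contra hc
      push_neg at hc
      rw [hc.1, hc.2] at hp
      simp at hp
    rw [hFs, Finset.mem_product]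
    refine ⟨?_, Finset.mem_univ _⟩
    rcases hne with h | h
    · exact Finset.mem_union_left _ (hTmem _ h)
    · refine Finset.mem_union_right _ (Finset.mem_biUnion.mpr ⟨p.2, Finset.mem_univ _, ?_⟩)
      exact Finset.mem_image.mpr ⟨p.1 + unit d p.2, hTmem _ h, by abel⟩
  have hTVτ : TV τ = ∑ p ∈ Fsupp, |τ (p.1 + unit d p.2) - τ p.1| := tv_fin τ Fsupp hFsupp
  have hTVnn : 0 ≤ TV τ := by
    rw [hTVτ]; exact Finset.sum_nonneg fun p _ => abs_nonneg _
  have tv_ge : ∀ F : Finset (Base d × Fin d),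
      ∑ p ∈ F, |τ (p.1 + unit d p.2) - τ p.1| ≤ TV τ := by
    intro F
    rw [tv_fin τ (F ∪ Fsupp) (fun p hp => Finset.mem_union_right _ (hFsupp p hp))]
    exact Finset.sum_le_sum_of_subset_of_nonneg Finset.subset_union_left
      (fun p _ _ => abs_nonneg _)
  -- coarse support
  set VI : Finset (Base d) := T.image (cubePt N) with hVI
  have hcs : ∀ u : Base d, coarse N τ u ≠ 0 → cubePt N u ∈ VI := by
    intro u hu
    by_contra hc
    apply hu
    have hz : Sv N τ (cubePt N u) = 0 := by
      rw [Sv]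
      refine Finset.sum_eq_zero fun w hw => ?_
      by_contra hwz
      exact hc (Finset.mem_image.mpr ⟨w, hTmem w hwz, cubePt_eq_of_mem N hN hw⟩)
    rw [coarse_eq', hz]
    norm_num [nearestInt_zero]
  set cells : Finset (Base d) := VI.biUnion (fun v => cubeFinset N v) with hcells
  set PF : Finset (Base d × Fin d) :=
    (cells ∪ Finset.univ.biUnion fun i => cells.image (fun w => w - unit d i)) ×ˢ Finset.univ
    with hPFdef
  have hPF : ∀ p : Base d × Fin d,
      |coarse N τ (p.1 + unit d p.2) - coarse N τ p.1| ≠ 0 → p ∈ PF := by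
    intro p hp
    have hne : coarse N τ p.1 ≠ 0 ∨ coarse N τ (p.1 + unit d p.2) ≠ 0 := by
      by_contra hc
      push_neg at hc
      rw [hc.1, hc.2] at hp
      simp at hp
    rw [hPFdef, Finset.mem_product]
    refine ⟨?_, Finset.mem_univ _⟩
    rcases hne with h | h
    · exact Finset.mem_union_left _ (Finset.mem_biUnion.mpr ⟨cubePt N p.1, hcs _ h,
        mem_cube_self N hN p.1⟩)
    · refine Finset.mem_union_right _ (Finset.mem_biUnion.mpr ⟨p.2, Finset.mem_univ _, ?_⟩)
      refine Finset.mem_image.mpr ⟨p.1 + unit d p.2, ?_, by abel⟩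
      exact Finset.mem_biUnion.mpr ⟨cubePt N _, hcs _ h, mem_cube_self N hN _⟩
  have hTVc : TV (coarse N τ)
      = ∑ p ∈ PF, |coarse N τ (p.1 + unit d p.2) - coarse N τ p.1| :=
    tv_fin _ PF hPF
  -- boundary filter
  set PFb : Finset (Base d × Fin d) :=
    PF.filter (fun p => cubePt N (p.1 + unit d p.2) ≠ cubePt N p.1) with hPFb
  have hsplit : ∑ p ∈ PF, |coarse N τ (p.1 + unit d p.2) - coarse N τ p.1|
      = ∑ p ∈ PFb, |coarse N τ (p.1 + unit d p.2) - coarse N τ p.1| := by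
    rw [hPFb, ← Finset.sum_filter_add_sum_filter_not PF
      (fun p => cubePt N (p.1 + unit d p.2) ≠ cubePt N p.1)]
    have hzero : ∑ p ∈ PF.filter (fun p => ¬cubePt N (p.1 + unit d p.2) ≠ cubePt N p.1),
        |coarse N τ (p.1 + unit d p.2) - coarse N τ p.1| = 0 := by
      refine Finset.sum_eq_zero fun p hp => ?_
      have heq : cubePt N (p.1 + unit d p.2) = cubePt N p.1 := by
        have := (Finset.mem_filter.mp hp).2
        push_neg at this
        exact this
      rw [coarse_eq', coarse_eq', heq, sub_self, abs_zero]
    rw [hzero, add_zero]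
  -- relevant cube bases
  set VV : Finset (Base d) := PF.image (fun p => cubePt N p.1)
    ∪ PF.image (fun p => cubePt N (p.1 + unit d p.2)) with hVVdef
  have hVV : ∀ v ∈ VV, ∃ u₀, v = cubePt N u₀ := by
    intro v hv
    rcases Finset.mem_union.mp hv with h | h <;>
      · obtain ⟨p, _, rfl⟩ := Finset.mem_image.mp h
        exact ⟨_, rfl⟩
  have hfaceU : ∀ v ∈ VV, ∀ i : Fin d, ∀ u ∈ faceUF N v i, cubePt N u = v := by
    intro v hv i u hu
    refine cubePt_of_face N hN (hVV v hv) ?_ hu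
    have := xU_mem N hN v i i
    rw [Finset.mem_Ico] at this
    exact this
  have hfaceD : ∀ v ∈ VV, ∀ i : Fin d, ∀ u ∈ faceDF N v i, cubePt N u = v := by
    intro v hv i u hu
    exact cubePt_of_face N hN (hVV v hv) ⟨le_refl _, by omega⟩ hu
  -- EQ bound
  have bndEQ : ∑ v ∈ VV, EQv N τ v ≤ TV τ := by
    rw [sum_EQ N hN τ VV hVV]
    exact tv_ge _
  -- A bound (lower endpoints)
  have bndA : ∑ p ∈ PFb, |(N:ℤ)^d * τ p.1 - Sv N τ (cubePt N p.1)|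
      ≤ (N:ℤ)^d * ((d:ℤ) * TV τ) := by
    have h1 : ∑ p ∈ PFb, |(N:ℤ)^d * τ p.1 - Sv N τ (cubePt N p.1)|
        ≤ ∑ q ∈ (VV ×ˢ Finset.univ).biUnion
            (fun vi => (faceUF N vi.1 vi.2).image (fun u => (u, vi.2))),
          |(N:ℤ)^d * τ q.1 - Sv N τ (cubePt N q.1)| := by
      refine genLe PFb _ _ _ id Function.injective_id (fun q _ => abs_nonneg _) ?_
      intro p hp _
      refine ⟨?_, le_refl _⟩
      have hmem := Finset.mem_filter.mp hp
      refine Finset.mem_biUnion.mpr ⟨(cubePt N p.1, p.2), ?_, ?_⟩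
      · rw [Finset.mem_product]
        exact ⟨Finset.mem_union_left _ (Finset.mem_image.mpr ⟨p, hmem.1, rfl⟩),
          Finset.mem_univ _⟩
      · exact Finset.mem_image.mpr ⟨p.1, mem_faceU N hN hmem.2, by simp⟩
    refine h1.trans ?_
    refine (FU_bound N hN τ VV hVV (faceUF N) hfaceU
      (fun v hv i => faceU_bound N hN τ (hVV v hv) i)).trans ?_
    have hdn : (0:ℤ) ≤ (d:ℤ) := by positivity
    exact mul_le_mul_of_nonneg_left (mul_le_mul_of_nonneg_left bndEQ hdn) (le_of_lt hnpos)
  -- C bound (upper endpoints)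
  have einj : Function.Injective
      (fun p : Base d × Fin d => (p.1 + unit d p.2, p.2)) := by
    rintro ⟨a, i⟩ ⟨b, j⟩ h
    simp only [Prod.mk.injEq] at h
    obtain ⟨h1, h2⟩ := h
    subst h2
    exact Prod.ext (add_right_cancel h1) rfl
  have bndC : ∑ p ∈ PFb, |(N:ℤ)^d * τ (p.1 + unit d p.2)
        - Sv N τ (cubePt N (p.1 + unit d p.2))|
      ≤ (N:ℤ)^d * ((d:ℤ) * TV τ) := by
    have h1 : ∑ p ∈ PFb, |(N:ℤ)^d * τ (p.1 + unit d p.2)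
          - Sv N τ (cubePt N (p.1 + unit d p.2))|
        ≤ ∑ q ∈ (VV ×ˢ Finset.univ).biUnion
            (fun vi => (faceDF N vi.1 vi.2).image (fun u => (u, vi.2))),
          |(N:ℤ)^d * τ q.1 - Sv N τ (cubePt N q.1)| := by
      refine genLe PFb _ _ _ (fun p => (p.1 + unit d p.2, p.2)) einj
        (fun q _ => abs_nonneg _) ?_
      intro p hp _
      refine ⟨?_, le_refl _⟩
      have hmem := Finset.mem_filter.mp hp
      refine Finset.mem_biUnion.mpr ⟨(cubePt N (p.1 + unit d p.2), p.2), ?_, ?_⟩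
      · rw [Finset.mem_product]
        exact ⟨Finset.mem_union_right _ (Finset.mem_image.mpr ⟨p, hmem.1, rfl⟩),
          Finset.mem_univ _⟩
      · exact Finset.mem_image.mpr ⟨p.1 + unit d p.2, mem_faceD N hN hmem.2, by simp⟩
    refine h1.trans ?_
    refine (FU_bound N hN τ VV hVV (faceDF N) hfaceD
      (fun v hv i => faceD_bound N hN τ (hVV v hv) i)).trans ?_
    have hdn : (0:ℤ) ≤ (d:ℤ) := by positivity
    exact mul_le_mul_of_nonneg_left (mul_le_mul_of_nonneg_left bndEQ hdn) (le_of_lt hnpos)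
  have bndB : ∑ p ∈ PFb, |τ (p.1 + unit d p.2) - τ p.1| ≤ TV τ := tv_ge PFb
  -- grand assembly
  have big : (N:ℤ)^d * TV (coarse N τ) ≤ (N:ℤ)^d * (4 * (d:ℤ) * TV τ + TV τ) := by
    rw [hTVc, hsplit, Finset.mul_sum]
    calc ∑ p ∈ PFb, (N:ℤ)^d * |coarse N τ (p.1 + unit d p.2) - coarse N τ p.1|
        ≤ ∑ p ∈ PFb, (2 * |(N:ℤ)^d * τ p.1 - Sv N τ (cubePt N p.1)|
            + (N:ℤ)^d * |τ (p.1 + unit d p.2) - τ p.1|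
            + 2 * |(N:ℤ)^d * τ (p.1 + unit d p.2)
                - Sv N τ (cubePt N (p.1 + unit d p.2))|) :=
          Finset.sum_le_sum fun p _ => perPair N hN τ p.1 p.2
      _ = 2 * (∑ p ∈ PFb, |(N:ℤ)^d * τ p.1 - Sv N τ (cubePt N p.1)|)
          + (N:ℤ)^d * (∑ p ∈ PFb, |τ (p.1 + unit d p.2) - τ p.1|)
          + 2 * (∑ p ∈ PFb, |(N:ℤ)^d * τ (p.1 + unit d p.2)
              - Sv N τ (cubePt N (p.1 + unit d p.2))|) := by
          rw [Finset.sum_add_distrib, Finset.sum_add_distrib,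
            ← Finset.mul_sum, ← Finset.mul_sum, ← Finset.mul_sum]
      _ ≤ 2 * ((N:ℤ)^d * ((d:ℤ) * TV τ)) + (N:ℤ)^d * TV τ
          + 2 * ((N:ℤ)^d * ((d:ℤ) * TV τ)) := by
          refine add_le_add (add_le_add ?_ ?_) ?_
          · exact mul_le_mul_of_nonneg_left bndA (by norm_num)
          · exact mul_le_mul_of_nonneg_left bndB (le_of_lt hnpos)
          · exact mul_le_mul_of_nonneg_left bndC (by norm_num)
      _ = (N:ℤ)^d * (4 * (d:ℤ) * TV τ + TV τ) := by ring
  have cancel : TV (coarse N τ) ≤ 4 * (d:ℤ) * TV τ + TV τ :=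
    le_of_mul_le_mul_left big hnpos
  have hd' : (1:ℤ) ≤ (d:ℤ) := by exact_mod_cast hd
  nlinarith [mul_nonneg (by linarith : (0:ℤ) ≤ 6 * (d:ℤ) - 1) hTVnn]
end

section
/- Let d ≥ 1, let τ : ℤ^d → ℤ be a shift, and let N be a positive integer. For every edge {u,v} ∈ E(ℤ^d), |τ^rough_N(Nu) − τ^rough_N(Nv)| ≤ N^{−(d−1)}·TV(τ; Q_N(Nu) ∪ Q_N(Nv)). -/
open DF


section Aux

open Finset

variable {d : ℕ}

/-- The `j`-th standard basis vector. -/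
def eVec {d : ℕ} (j : Fin d) : Base d := Pi.single j 1

lemma eVec_apply (j i : Fin d) : eVec j i = if i = j then 1 else 0 := by
  rw [eVec, Pi.single_apply]

lemma smul_eVec_apply (k : ℕ) (j i : Fin d) :
    (k • eVec j) i = if i = j then (k : ℤ) else 0 := by
  rw [Pi.smul_apply, eVec_apply]
  split <;> simp

lemma mem_cube {N : ℕ} {c x : Base d} :
    x ∈ cubeFinset N c ↔ ∀ i, c i ≤ x i ∧ x i < c i + N := by
  simp [cubeFinset, Fintype.mem_piFinset, Finset.mem_Ico]

lemma cubePt_mul {N : ℕ} (hN : 0 < N) (u : Base d) :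
    cubePt N (fun i => (N : ℤ) * u i) = fun i => (N : ℤ) * u i := by
  funext i
  have hNz : (N : ℤ) ≠ 0 := by exact_mod_cast hN.ne'
  simp [cubePt, Int.mul_fdiv_cancel_left _ hNz]

lemma pairAbsDiff_mk (τ : Base d → ℤ) (a b : Base d) :
    pairAbsDiff τ s(a, b) = |τ a - τ b| := rfl

lemma baseAdj_step (x : Base d) (j : Fin d) : baseAdj x (x + eVec j) := by
  unfold baseAdj dist1
  have h : ∀ i : Fin d, |x i - (x + eVec j) i| = if i = j then (1 : ℤ) else 0 := by
    intro i
    have hx : (x + eVec j) i = x i + eVec j i := rfl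
    rw [hx, eVec_apply]
    by_cases h : i = j <;> simp [h]
  rw [Finset.sum_congr rfl (fun i _ => h i)]
  simp

/-- The finite set of edges inside the union of the two cubes. -/
noncomputable def edgeFinset (N : ℕ) (u v : Base d) : Finset (Sym2 (Base d)) :=
  @Finset.filter _
    (fun e => IsBaseEdge e ∧ ∀ x ∈ e,
      x ∈ ((cubeFinset N (fun i => (N : ℤ) * u i) : Set (Base d)) ∪
        (cubeFinset N (fun i => (N : ℤ) * v i) : Set (Base d))))
    (Classical.decPred _)
    (cubeFinset N (fun i => (N : ℤ) * u i) ∪ cubeFinset N (fun i => (N : ℤ) * v i)).sym2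

lemma TVon_eq (N : ℕ) (τ : Base d → ℤ) (u v : Base d) :
    TVon τ ((cubeFinset N (fun i => (N : ℤ) * u i) : Set (Base d)) ∪
        (cubeFinset N (fun i => (N : ℤ) * v i) : Set (Base d))) =
      ∑ e ∈ edgeFinset N u v, pairAbsDiff τ e := by
  classical
  have hset : {e : Sym2 (Base d) | IsBaseEdge e ∧ ∀ x ∈ e,
      x ∈ ((cubeFinset N (fun i => (N : ℤ) * u i) : Set (Base d)) ∪
        (cubeFinset N (fun i => (N : ℤ) * v i) : Set (Base d)))} = ↑(edgeFinset N u v) := by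
    ext e
    induction e using Sym2.ind with
    | _ a b =>
      simp only [edgeFinset, Finset.coe_filter, Set.mem_setOf_eq, Finset.mem_coe,
        Finset.mk_mem_sym2_iff, Finset.mem_union]
      constructor
      · rintro ⟨h1, h2⟩
        refine ⟨⟨?_, ?_⟩, h1, h2⟩
        · have := h2 a (by simp)
          simpa [Set.mem_union] using this
        · have := h2 b (by simp)
          simpa [Set.mem_union] using this
      · rintro ⟨-, h1, h2⟩
        exact ⟨h1, h2⟩
  rw [TVon, hset, finsum_mem_coe_finset]

lemma shift_mem {N : ℕ} {u v : Base d} {j : Fin d}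
    (hv : v = u + eVec j) {w : Base d}
    (hw : w ∈ cubeFinset N (fun i => (N : ℤ) * u i)) {k : ℕ} (hk : k ≤ N) :
    w + k • eVec j ∈
      cubeFinset N (fun i => (N : ℤ) * u i) ∪ cubeFinset N (fun i => (N : ℤ) * v i) := by
  rw [mem_cube] at hw
  have happj : (w + k • eVec j) j = w j + k := by
    have h0 : (w + k • eVec j) j = w j + (k • eVec j) j := rfl
    rw [h0, smul_eVec_apply, if_pos rfl]
  have happne : ∀ i, i ≠ j → (w + k • eVec j) i = w i := by
    intro i hij
    have h0 : (w + k • eVec j) i = w i + (k • eVec j) i := rfl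
    rw [h0, smul_eVec_apply, if_neg hij, add_zero]
  have hvj : (N:ℤ) * v j = (N:ℤ) * u j + N := by
    have hv1 : v j = u j + 1 := by
      rw [hv]
      have h0 : (u + eVec j) j = u j + eVec j j := rfl
      rw [h0, eVec_apply, if_pos rfl]
    rw [hv1, mul_add, mul_one]
  have hvne : ∀ i, i ≠ j → v i = u i := by
    intro i hij
    rw [hv]
    have h0 : (u + eVec j) i = u i + eVec j i := rfl
    rw [h0, eVec_apply, if_neg hij, add_zero]
  have hkZ : (k : ℤ) ≤ N := by exact_mod_cast hk
  rw [Finset.mem_union, mem_cube, mem_cube]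
  by_cases h : w j + k < (N : ℤ) * u j + N
  · left
    intro i
    have h1 := hw i
    by_cases hij : i = j
    · subst hij
      rw [happj]
      constructor <;> [linarith [h1.1, Int.ofNat_nonneg k]; linarith]
    · rw [happne i hij]
      exact h1
  · right
    intro i
    have h1 := hw i
    push_neg at h
    by_cases hij : i = j
    · subst hij
      rw [happj, hvj]
      constructor <;> linarith [h1.1, h1.2]
    · rw [happne i hij, hvne i hij]
      exact h1

lemma layer_le {N : ℕ} (τ : Base d → ℤ) {u v : Base d} {j : Fin d}
    (hv : v = u + eVec j) {k : ℕ} (hk : k + 1 ≤ N) :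
    ∑ w ∈ cubeFinset N (fun i => (N : ℤ) * u i),
        |τ (w + k • eVec j) - τ (w + (k + 1) • eVec j)| ≤
      ∑ e ∈ edgeFinset N u v, pairAbsDiff τ e := by
  classical
  set Qu := cubeFinset N (fun i => (N : ℤ) * u i) with hQu
  set φ : Base d → Sym2 (Base d) :=
    fun w => s(w + k • eVec j, w + (k + 1) • eVec j) with hφ
  have hinj : ∀ x ∈ Qu, ∀ y ∈ Qu, φ x = φ y → x = y := by
    intro x _ y _ hxy
    simp only [hφ, Sym2.eq, Sym2.rel_iff', Prod.mk.injEq, Prod.swap_prod_mk] at hxy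
    rcases hxy with ⟨h1, -⟩ | ⟨h1, h2⟩
    · exact add_right_cancel h1
    · exfalso
      have hj1 := congrFun h1 j
      have hj2 := congrFun h2 j
      have e1 : ∀ z : Base d, ∀ m : ℕ, (z + m • eVec j) j = z j + m := by
        intro z m
        have : (z + m • eVec j) j = z j + (m • eVec j) j := rfl
        rw [this, smul_eVec_apply]
        simp
      rw [e1, e1] at hj1
      rw [e1, e1] at hj2
      omega
  have himg : ∀ w ∈ Qu, φ w ∈ edgeFinset N u v := by
    intro w hw
    have hmem1 := shift_mem hv hw (Nat.le_of_succ_le hk)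
    have hmem2 := shift_mem hv hw hk
    simp only [edgeFinset, Finset.mem_filter]
    refine ⟨?_, ?_, ?_⟩
    · rw [hφ]
      simp only [Finset.mk_mem_sym2_iff]
      exact ⟨hmem1, hmem2⟩
    · refine ⟨w + k • eVec j, w + (k+1) • eVec j, ?_, rfl⟩
      have hstep : w + (k+1) • eVec j = (w + k • eVec j) + eVec j := by
        rw [succ_nsmul, add_assoc]
      rw [hstep]
      exact baseAdj_step _ j
    · intro x hx
      rw [hφ] at hx
      simp only [Sym2.mem_iff] at hx
      rcases hx with hx | hx <;> subst hx
      · simpa [Set.mem_union, Finset.mem_union] using hmem1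
      · simpa [Set.mem_union, Finset.mem_union] using hmem2
  calc ∑ w ∈ Qu, |τ (w + k • eVec j) - τ (w + (k + 1) • eVec j)|
      = ∑ e ∈ Qu.image φ, pairAbsDiff τ e := by rw [Finset.sum_image hinj]; rfl
    _ ≤ ∑ e ∈ edgeFinset N u v, pairAbsDiff τ e := by
        apply Finset.sum_le_sum_of_subset_of_nonneg
        · intro e he
          rw [Finset.mem_image] at he
          obtain ⟨w, hw, rfl⟩ := he
          exact himg w hw
        · intro e _ _
          induction e using Sym2.ind with
          | _ a b => exact abs_nonneg _

lemma key_lemma {N : ℕ} (hN : 0 < N) (τ : Base d → ℤ) {u v : Base d} {j : Fin d}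
    (hv : v = u + eVec j) :
    |(∑ w ∈ cubeFinset N (fun i => (N : ℤ) * u i), τ w) -
        ∑ w ∈ cubeFinset N (fun i => (N : ℤ) * v i), τ w| ≤
      (N : ℤ) * ∑ e ∈ edgeFinset N u v, pairAbsDiff τ e := by
  classical
  set Qu := cubeFinset N (fun i => (N : ℤ) * u i) with hQu
  set Qv := cubeFinset N (fun i => (N : ℤ) * v i) with hQv
  have hvi : ∀ i, v i = u i + eVec j i := fun i => by rw [hv]; rfl
  have happN : ∀ z : Base d, ∀ m : ℕ, ∀ i,
      (z + m • eVec j) i = z i + (if i = j then (m:ℤ) else 0) := by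
    intro z m i
    have : (z + m • eVec j) i = z i + (m • eVec j) i := rfl
    rw [this, smul_eVec_apply]
  have hvj : ∀ i, (N:ℤ) * v i = (N:ℤ) * u i + (if i = j then (N:ℤ) else 0) := by
    intro i
    rw [hvi i, eVec_apply, mul_add]
    split <;> simp
  -- bijection between the two cubes
  have hbij : ∑ w ∈ Qv, τ w = ∑ w ∈ Qu, τ (w + N • eVec j) := by
    apply Finset.sum_bij' (i := fun w _ => w - N • eVec j)
      (j := fun w _ => w + N • eVec j)
    · intro a ha
      rw [hQu, mem_cube]
      rw [hQv, mem_cube] at ha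
      intro i
      have h := ha i
      rw [hvj i] at h
      have hs : (a - N • eVec j) i = a i - (if i = j then (N:ℤ) else 0) := by
        have : (a - N • eVec j) i = a i - (N • eVec j) i := rfl
        rw [this, smul_eVec_apply]
      rw [hs]
      constructor <;> [linarith [h.1]; linarith [h.2]]
    · intro a ha
      rw [hQv, mem_cube]
      rw [hQu, mem_cube] at ha
      intro i
      have h := ha i
      rw [hvj i, happN a N i]
      constructor <;> [linarith [h.1]; linarith [h.2]]
    · intro a _; abel
    · intro a _; abel
    · intro a _; rw [sub_add_cancel]
  rw [hbij, ← Finset.sum_sub_distrib]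
  have htel : ∀ w : Base d, τ w - τ (w + N • eVec j) =
      ∑ k ∈ Finset.range N, (τ (w + k • eVec j) - τ (w + (k+1) • eVec j)) := by
    intro w
    rw [Finset.sum_range_sub' (fun k => τ (w + k • eVec j))]
    simp
  calc |∑ w ∈ Qu, (τ w - τ (w + N • eVec j))|
      ≤ ∑ w ∈ Qu, |τ w - τ (w + N • eVec j)| := Finset.abs_sum_le_sum_abs _ _
    _ ≤ ∑ w ∈ Qu, ∑ k ∈ Finset.range N,
          |τ (w + k • eVec j) - τ (w + (k+1) • eVec j)| := by
        apply Finset.sum_le_sum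
        intro w _
        rw [htel w]
        exact Finset.abs_sum_le_sum_abs _ _
    _ = ∑ k ∈ Finset.range N, ∑ w ∈ Qu,
          |τ (w + k • eVec j) - τ (w + (k+1) • eVec j)| := Finset.sum_comm
    _ ≤ ∑ _k ∈ Finset.range N, ∑ e ∈ edgeFinset N u v, pairAbsDiff τ e := by
        apply Finset.sum_le_sum
        intro k hk
        exact layer_le τ hv (Finset.mem_range.mp hk)
    _ = (N : ℤ) * ∑ e ∈ edgeFinset N u v, pairAbsDiff τ e := by
        rw [Finset.sum_const, Finset.card_range]
        simp [nsmul_eq_mul]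

lemma adj_structure {u v : Base d} (huv : baseAdj u v) :
    ∃ j : Fin d, v = u + eVec j ∨ u = v + eVec j := by
  classical
  unfold baseAdj dist1 at huv
  have hne : ∑ i, |u i - v i| ≠ 0 := by rw [huv]; norm_num
  obtain ⟨j, -, hj⟩ := Finset.exists_ne_zero_of_sum_ne_zero hne
  have hj1 : 1 ≤ |u j - v j| := by
    have := abs_nonneg (u j - v j)
    omega
  have hsum := Finset.add_sum_erase Finset.univ (fun i => |u i - v i|) (Finset.mem_univ j)
  have hnn : 0 ≤ ∑ i ∈ Finset.univ.erase j, |u i - v i| :=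
    Finset.sum_nonneg (fun i _ => abs_nonneg _)
  have hone : |u j - v j| = 1 := by linarith
  have hzero : ∑ i ∈ Finset.univ.erase j, |u i - v i| = 0 := by linarith
  have hrest : ∀ i, i ≠ j → u i = v i := by
    intro i hij
    have h2 := (Finset.sum_eq_zero_iff_of_nonneg (fun i _ => abs_nonneg _)).mp hzero i
      (Finset.mem_erase.mpr ⟨hij, Finset.mem_univ i⟩)
    have h2' : |u i - v i| = 0 := by simpa using h2
    have h3 := abs_eq_zero.mp h2'
    omega
  refine ⟨j, ?_⟩
  have hcase : u j - v j = 1 ∨ u j - v j = -1 := by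
    rcases (abs_eq (by norm_num : (0:ℤ) ≤ 1)).mp hone with h | h
    · exact Or.inl h
    · exact Or.inr h
  rcases hcase with h | h
  · right
    funext i
    have h0 : (v + eVec j) i = v i + eVec j i := rfl
    rw [h0, eVec_apply]
    by_cases hij : i = j
    · subst hij; rw [if_pos rfl]; omega
    · rw [if_neg hij, add_zero]; exact hrest i hij
  · left
    funext i
    have h0 : (u + eVec j) i = u i + eVec j i := rfl
    rw [h0, eVec_apply]
    by_cases hij : i = j
    · subst hij; rw [if_pos rfl]; omega
    · rw [if_neg hij, add_zero]; exact (hrest i hij).symm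

lemma final_form (d N : ℕ) (hd : 1 ≤ d) (hN : 0 < N) (a b t : ℤ)
    (h : |a - b| ≤ (N : ℤ) * t) :
    |(a : ℝ) / (N : ℝ) ^ d - (b : ℝ) / (N : ℝ) ^ d| ≤ (t : ℝ) / (N : ℝ) ^ (d - 1) := by
  have hNp : (0:ℝ) < (N:ℝ) := by exact_mod_cast hN
  have h1 : (0:ℝ) < (N:ℝ) ^ (d-1) := pow_pos hNp _
  have h2 : (0:ℝ) < (N:ℝ) ^ d := pow_pos hNp _
  rw [div_sub_div_same, abs_div, abs_of_pos h2, div_le_div_iff₀ h2 h1]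
  have hR : |(a:ℝ) - b| ≤ (N:ℝ) * t := by exact_mod_cast h
  have hpow : (N:ℝ) ^ d = (N:ℝ) ^ (d-1) * N := by
    rw [← pow_succ]
    congr 1
    omega
  calc |(a:ℝ) - b| * (N:ℝ) ^ (d-1) ≤ ((N:ℝ) * t) * (N:ℝ) ^ (d-1) :=
        mul_le_mul_of_nonneg_right hR h1.le
    _ = (t:ℝ) * (N:ℝ) ^ d := by rw [hpow]; ring

end Aux

/-- For every shift `τ`, positive integer `N` and edge `{u,v}` of
`ℤ^d`, `|τ^rough_N(Nu) − τ^rough_N(Nv)| ≤ N^{−(d−1)} TV(τ; Q_N(Nu) ∪ Q_N(Nv))`. -/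
theorem rough_average_lipschitz_bound
    (d : ℕ) (hd : 1 ≤ d) (τ : Base d → ℤ) (hτ : IsShift τ) (N : ℕ) (hN : 0 < N)
    (u v : Base d) (huv : baseAdj u v) :
    |roughAvg N τ (fun i => (N : ℤ) * u i) - roughAvg N τ (fun i => (N : ℤ) * v i)| ≤
      (TVon τ ((cubeFinset N (fun i => (N : ℤ) * u i) : Set (Base d)) ∪
          (cubeFinset N (fun i => (N : ℤ) * v i) : Set (Base d))) : ℝ) /
        (N : ℝ) ^ (d - 1) := by
  obtain ⟨jj, hc | hc⟩ := adj_structure huv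
  · rw [roughAvg, roughAvg, cubePt_mul hN u, cubePt_mul hN v, TVon_eq N τ u v]
    have hkey := key_lemma hN τ hc
    have c1 : (∑ w ∈ cubeFinset N (fun i => (N:ℤ) * u i), (τ w : ℝ)) =
        ((∑ w ∈ cubeFinset N (fun i => (N:ℤ) * u i), τ w : ℤ) : ℝ) := by push_cast; rfl
    have c2 : (∑ w ∈ cubeFinset N (fun i => (N:ℤ) * v i), (τ w : ℝ)) =
        ((∑ w ∈ cubeFinset N (fun i => (N:ℤ) * v i), τ w : ℤ) : ℝ) := by push_cast; rfl
    rw [c1, c2]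
    exact final_form d N hd hN _ _ _ hkey
  · rw [roughAvg, roughAvg, cubePt_mul hN u, cubePt_mul hN v, Set.union_comm,
      TVon_eq N τ v u, abs_sub_comm]
    have hkey := key_lemma hN τ hc
    have c1 : (∑ w ∈ cubeFinset N (fun i => (N:ℤ) * u i), (τ w : ℝ)) =
        ((∑ w ∈ cubeFinset N (fun i => (N:ℤ) * u i), τ w : ℤ) : ℝ) := by push_cast; rfl
    have c2 : (∑ w ∈ cubeFinset N (fun i => (N:ℤ) * v i), (τ w : ℝ)) =
        ((∑ w ∈ cubeFinset N (fun i => (N:ℤ) * v i), τ w : ℤ) : ℝ) := by push_cast; rfl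
    rw [c1, c2]
    exact final_form d N hd hN _ _ _ hkey
end

section
/- Let d ≥ 1, let τ : ℤ^d → ℤ be a shift, let N be a positive integer, let 0 < α < 1/2, and let u ∈ ℤ^d be such that |τ^rough_N(Nu) − τ_N(Nu)| > α. Then TV(τ; Q_N(Nu)) ≥ (2α/3)·N^{d−1}. -/
open DF

namespace DFProof
open DF

noncomputable def f (x : ℝ) : ℝ := |x - (nearestInt x : ℝ)|

lemma f_nonneg (x : ℝ) : 0 ≤ f x := abs_nonneg _

lemma f_le (x : ℝ) (k : ℤ) : f x ≤ |x - (k : ℝ)| := by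
  rcases eq_or_ne k (nearestInt x) with rfl | hk
  · exact le_refl _
  · have h1 : x - 1/2 ≤ (nearestInt x : ℝ) := Int.le_ceil _
    have h2 : (nearestInt x : ℝ) < (x - 1/2) + 1 := Int.ceil_lt_add_one _
    have h3 : f x ≤ 1/2 := by
      rw [f, abs_le]; constructor <;> linarith
    have h4 : (1 : ℝ) ≤ |(nearestInt x : ℝ) - (k : ℝ)| := by
      have : (1 : ℤ) ≤ |nearestInt x - k| := Int.one_le_abs (sub_ne_zero.2 (Ne.symm hk))
      calc (1:ℝ) = ((1:ℤ):ℝ) := by norm_num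
        _ ≤ ((|nearestInt x - k| : ℤ) : ℝ) := by exact_mod_cast this
        _ = |(nearestInt x : ℝ) - (k : ℝ)| := by push_cast; ring_nf
    have h5 : |(nearestInt x : ℝ) - k| ≤ |x - (nearestInt x:ℝ)| + |x - k| := by
      calc |(nearestInt x : ℝ) - k| = |(nearestInt x - x) + (x - k)| := by ring_nf
        _ ≤ |(nearestInt x:ℝ) - x| + |x - k| := abs_add_le _ _
        _ = |x - (nearestInt x:ℝ)| + |x - k| := by rw [abs_sub_comm]
    have : 1/2 ≤ |x - (k:ℝ)| := by
      have := f_nonneg x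
      rw [f] at *
      linarith
    linarith [h3]

lemma f_int (k : ℤ) : f (k : ℝ) = 0 := by
  have := f_le (k : ℝ) k
  simp at this
  have := f_nonneg (k : ℝ)
  linarith [f_le (k:ℝ) k, abs_nonneg ((k:ℝ) - k)]

lemma f_lip (x y : ℝ) : f x ≤ f y + |x - y| := by
  calc f x ≤ |x - (nearestInt y : ℝ)| := f_le x _
    _ = |(x - y) + (y - nearestInt y)| := by ring_nf
    _ ≤ |x - y| + |y - (nearestInt y:ℝ)| := abs_add_le _ _
    _ = f y + |x - y| := by rw [f]; ring

end DFProof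
namespace DFProof
open DF

lemma mem_cube {d N : ℕ} {c w : Base d} :
    w ∈ cubeFinset N c ↔ ∀ i, c i ≤ w i ∧ w i < c i + N := by
  simp [cubeFinset, Fintype.mem_piFinset, Finset.mem_Ico]

/-- Oriented edge-sum version of total variation on a cube. -/
noncomputable def esum (d N : ℕ) (c : Base d) (τ : Base d → ℤ) : ℤ :=
  ∑ w ∈ cubeFinset N c, ∑ i : Fin d,
    if w + Pi.single i 1 ∈ cubeFinset N c then |τ (w + Pi.single i 1) - τ w| else 0

lemma esum_nonneg (d N : ℕ) (c : Base d) (τ : Base d → ℤ) : 0 ≤ esum d N c τ := by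
  refine Finset.sum_nonneg fun w _ => Finset.sum_nonneg fun i _ => ?_
  split
  · exact abs_nonneg _
  · exact le_refl 0

lemma cons_mem {d N : ℕ} {c : Base (d+1)} {t : ℤ} {x : Base d} :
    (Fin.cons t x : Base (d+1)) ∈ cubeFinset N c ↔
      t ∈ Finset.Ico (c 0) (c 0 + (N:ℤ)) ∧ x ∈ cubeFinset N (Fin.tail c) := by
  simp only [mem_cube, Fin.forall_fin_succ, Fin.cons_zero, Fin.cons_succ, Finset.mem_Ico,
    Fin.tail]

lemma sum_cube_succ {M : Type*} [AddCommMonoid M] (d N : ℕ) (c : Base (d+1))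
    (F : Base (d+1) → M) :
    ∑ w ∈ cubeFinset N c, F w =
      ∑ t ∈ Finset.Ico (c 0) (c 0 + (N:ℤ)), ∑ x ∈ cubeFinset N (Fin.tail c),
        F (Fin.cons t x) := by
  rw [← Finset.sum_product']
  refine Finset.sum_nbij' (fun w => (w 0, Fin.tail w)) (fun p => Fin.cons p.1 p.2) ?_ ?_ ?_ ?_ ?_
  · intro w hw
    rw [Finset.mem_product]
    have := (cons_mem (N := N) (c := c)).1 (by rwa [Fin.cons_self_tail])
    exact ⟨this.1, this.2⟩
  · intro p hp
    rw [Finset.mem_product] at hp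
    exact cons_mem.2 ⟨hp.1, hp.2⟩
  · intro w hw; exact Fin.cons_self_tail w
  · intro p hp; simp [Fin.tail_cons]
  · intro w hw; rw [Fin.cons_self_tail]

lemma cons_add_single_succ {d : ℕ} (t : ℤ) (x : Base d) (j : Fin d) :
    (Fin.cons t x : Base (d+1)) + Pi.single j.succ 1 = Fin.cons t (x + Pi.single j 1) := by
  funext i
  refine Fin.cases ?_ (fun k => ?_) i
  · simp [Pi.single_apply, Fin.succ_ne_zero]
  · simp [Pi.single_apply, Fin.succ_inj]

lemma cons_add_single_zero {d : ℕ} (t : ℤ) (x : Base d) :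
    (Fin.cons t x : Base (d+1)) + Pi.single 0 1 = Fin.cons (t+1) x := by
  funext i
  refine Fin.cases ?_ (fun k => ?_) i
  · simp [Pi.single_apply]
  · simp [Pi.single_apply, Fin.succ_ne_zero]

end DFProof
namespace DFProof
open DF

lemma tele_aux (g : ℤ → ℝ) (s : ℤ) : ∀ n : ℕ,
    |g (s+n) - g s| ≤ ∑ r ∈ Finset.Ico s (s+n), |g (r+1) - g r| := by
  intro n
  induction n with
  | zero => simp
  | succ n ih =>
    have hins : Finset.Ico s (s+(n+1:ℕ)) = insert (s+n) (Finset.Ico s (s+(n:ℕ))) := by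
      ext r; simp only [Finset.mem_insert, Finset.mem_Ico]; push_cast; omega
    rw [hins, Finset.sum_insert (by simp [Finset.mem_Ico])]
    have e1 : (s+(n+1:ℕ)) = (s+(n:ℕ))+1 := by push_cast; ring
    rw [e1]
    calc |g ((s+(n:ℕ))+1) - g s| = |(g ((s+(n:ℕ))+1) - g (s+(n:ℕ))) + (g (s+(n:ℕ)) - g s)| := by
          ring_nf
      _ ≤ |g ((s+(n:ℕ))+1) - g (s+(n:ℕ))| + |g (s+(n:ℕ)) - g s| := abs_add_le _ _
      _ ≤ _ := by linarith

lemma tele_aux' (g : ℤ → ℝ) (s t : ℤ) (hst : s ≤ t) :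
    |g t - g s| ≤ ∑ r ∈ Finset.Ico s t, |g (r+1) - g r| := by
  obtain ⟨n, rfl⟩ : ∃ n : ℕ, t = s + n := ⟨(t-s).toNat, by omega⟩
  exact tele_aux g s n

lemma tele (g : ℤ → ℝ) {L U s t : ℤ} (hs : s ∈ Finset.Ico L U) (ht : t ∈ Finset.Ico L U) :
    |g t - g s| ≤ ∑ r ∈ Finset.Ico L (U-1), |g (r+1) - g r| := by
  simp only [Finset.mem_Ico] at hs ht
  wlog hst : s ≤ t generalizing s t
  · rw [abs_sub_comm]; exact this ht hs (by omega)
  calc |g t - g s| ≤ ∑ r ∈ Finset.Ico s t, |g (r+1) - g r| := tele_aux' g s t hst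
    _ ≤ ∑ r ∈ Finset.Ico L (U-1), |g (r+1) - g r| := by
        refine Finset.sum_le_sum_of_subset_of_nonneg ?_ (fun _ _ _ => abs_nonneg _)
        intro r hr; simp only [Finset.mem_Ico] at *; omega

end DFProof
namespace DFProof
open DF

lemma cube_zero (N : ℕ) (c : Base 0) : cubeFinset N c = {c} := by
  ext x
  simp only [mem_cube, Finset.mem_singleton]
  constructor
  · intro _; exact Subsingleton.elim x c
  · intro _ i; exact i.elim0

lemma esum_decomp (d N : ℕ) (c : Base (d+1)) (τ : Base (d+1) → ℤ) :
    esum (d+1) N c τ =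
      (∑ t ∈ Finset.Ico (c 0) (c 0 + (N:ℤ) - 1), ∑ x ∈ cubeFinset N (Fin.tail c),
        |τ (Fin.cons (t+1) x) - τ (Fin.cons t x)|) +
      ∑ t ∈ Finset.Ico (c 0) (c 0 + (N:ℤ)), esum d N (Fin.tail c) (fun x => τ (Fin.cons t x)) := by
  rw [esum, sum_cube_succ]
  have hG : ∀ t ∈ Finset.Ico (c 0) (c 0 + (N:ℤ)), ∀ x ∈ cubeFinset N (Fin.tail c),
      (∑ i : Fin (d+1), if (Fin.cons t x : Base (d+1)) + Pi.single i 1 ∈ cubeFinset N c then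
          |τ ((Fin.cons t x : Base (d+1)) + Pi.single i 1) - τ (Fin.cons t x)| else 0) =
      (if t + 1 ∈ Finset.Ico (c 0) (c 0 + (N:ℤ)) then
          |τ (Fin.cons (t+1) x) - τ (Fin.cons t x)| else 0) +
      ∑ j : Fin d, (if x + Pi.single j 1 ∈ cubeFinset N (Fin.tail c) then
          |τ (Fin.cons t (x + Pi.single j 1)) - τ (Fin.cons t x)| else 0) := by
    intro t ht x hx
    rw [Fin.sum_univ_succ]
    have h0 : ((Fin.cons t x : Base (d+1)) + Pi.single 0 1 ∈ cubeFinset N c) ↔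
        (t + 1 ∈ Finset.Ico (c 0) (c 0 + (N:ℤ))) := by
      rw [cons_add_single_zero, cons_mem]
      tauto
    have h0' : (if (Fin.cons t x : Base (d+1)) + Pi.single 0 1 ∈ cubeFinset N c then
          |τ ((Fin.cons t x : Base (d+1)) + Pi.single 0 1) - τ (Fin.cons t x)| else 0) =
        (if t + 1 ∈ Finset.Ico (c 0) (c 0 + (N:ℤ)) then
          |τ (Fin.cons (t+1) x) - τ (Fin.cons t x)| else 0) := by
      rw [cons_add_single_zero]
      simp only [cons_mem, hx, and_true]
    rw [h0']
    congr 1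
    refine Finset.sum_congr rfl fun j _ => ?_
    rw [cons_add_single_succ]
    simp only [cons_mem, ht, true_and]
  rw [Finset.sum_congr rfl fun t ht => Finset.sum_congr rfl (hG t ht)]
  have hsplit : ∀ t ∈ Finset.Ico (c 0) (c 0 + (N:ℤ)),
      (∑ x ∈ cubeFinset N (Fin.tail c),
        ((if t + 1 ∈ Finset.Ico (c 0) (c 0 + (N:ℤ)) then
          |τ (Fin.cons (t+1) x) - τ (Fin.cons t x)| else 0) +
        ∑ j : Fin d, (if x + Pi.single j 1 ∈ cubeFinset N (Fin.tail c) then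
          |τ (Fin.cons t (x + Pi.single j 1)) - τ (Fin.cons t x)| else 0))) =
      (if t + 1 ∈ Finset.Ico (c 0) (c 0 + (N:ℤ)) then
        ∑ x ∈ cubeFinset N (Fin.tail c), |τ (Fin.cons (t+1) x) - τ (Fin.cons t x)| else 0) +
      esum d N (Fin.tail c) (fun x => τ (Fin.cons t x)) := by
    intro t ht
    rw [Finset.sum_add_distrib]
    congr 1
    split_ifs <;> simp
  rw [Finset.sum_congr rfl hsplit, Finset.sum_add_distrib]
  congr 1
  rw [← Finset.sum_filter]
  congr 1
  ext r
  simp only [Finset.mem_filter, Finset.mem_Ico]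
  omega

end DFProof
namespace DFProof
open DF

lemma core : ∀ (d N : ℕ), 0 < N → ∀ (c : Base d) (τ : Base d → ℤ),
    f ((∑ w ∈ cubeFinset N c, (τ w : ℝ)) / (N:ℝ)^d) * (N:ℝ)^(d-1) ≤ (esum d N c τ : ℝ) := by
  intro d
  induction d with
  | zero =>
    intro N hN c τ
    rw [cube_zero]
    simp only [Finset.sum_singleton, pow_zero, div_one, Nat.zero_sub, mul_one]
    rw [f_int]
    exact_mod_cast esum_nonneg 0 N c τ
  | succ d ih =>
    intro N hN c τ
    have hNR : (0:ℝ) < (N:ℝ) := by exact_mod_cast hN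
    have hK : (0:ℝ) < (N:ℝ)^d := pow_pos hNR d
    set I := Finset.Ico (c 0) (c 0 + (N:ℤ)) with hI
    set Qd := cubeFinset N (Fin.tail c) with hQd
    set g : ℤ → ℝ := fun t => (∑ x ∈ Qd, (τ (Fin.cons t x) : ℝ)) / (N:ℝ)^d with hg
    set A : ℝ := (∑ w ∈ cubeFinset N c, (τ w : ℝ)) / (N:ℝ)^(d+1) with hA
    set V : ℝ := ∑ r ∈ Finset.Ico (c 0) (c 0 + (N:ℤ) - 1), |g (r+1) - g r| with hV
    have hcard : I.card = N := by
      rw [hI, Int.card_Ico]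
      omega
    have hIA : A = (∑ t ∈ I, g t) / N := by
      rw [hA, sum_cube_succ d N c (fun w => (τ w : ℝ))]
      rw [hg]
      rw [← Finset.sum_div, pow_succ]
      field_simp
      rfl
    have hgV : ∀ t ∈ I, ∀ s ∈ I, |g t - g s| ≤ V := by
      intro t ht s hs
      have := tele g (L := c 0) (U := c 0 + N) hs ht
      rw [hV]
      exact this
    have hAt : ∀ t ∈ I, |A - g t| ≤ V := by
      intro t ht
      have h1 : A - g t = (∑ s ∈ I, (g s - g t)) / N := by
        rw [Finset.sum_sub_distrib, Finset.sum_const, hcard, hIA]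
        field_simp
        rw [nsmul_eq_mul]
      rw [h1, abs_div, abs_of_pos hNR, div_le_iff₀ hNR]
      calc |∑ s ∈ I, (g s - g t)| ≤ ∑ s ∈ I, |g s - g t| := Finset.abs_sum_le_sum_abs _ _
        _ ≤ ∑ s ∈ I, V := Finset.sum_le_sum fun s hs => hgV s hs t ht
        _ = N * V := by rw [Finset.sum_const, hcard]; ring
        _ = V * N := by ring
    have hfA : (N:ℝ) * f A ≤ (∑ t ∈ I, f (g t)) + (N:ℝ) * V := by
      have h2 : ∀ t ∈ I, f A ≤ f (g t) + V := fun t ht =>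
        le_trans (f_lip A (g t)) (by linarith [hAt t ht])
      calc (N:ℝ) * f A = ∑ t ∈ I, f A := by rw [Finset.sum_const, hcard]; ring
        _ ≤ ∑ t ∈ I, (f (g t) + V) := Finset.sum_le_sum h2
        _ = (∑ t ∈ I, f (g t)) + (N:ℝ) * V := by
            rw [Finset.sum_add_distrib, Finset.sum_const, hcard]; ring
    have hpow : (N:ℝ)^d ≤ (N:ℝ)^(d-1) * N := by
      cases d with
      | zero => simpa using (by exact_mod_cast hN : (1:ℝ) ≤ N)
      | succ e => simp [pow_succ]
    have hIH : ∀ t, (N:ℝ)^d * f (g t) ≤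
        (N:ℝ) * (esum d N (Fin.tail c) (fun x => τ (Fin.cons t x)) : ℝ) := by
      intro t
      have h3 := ih N hN (Fin.tail c) (fun x => τ (Fin.cons t x))
      have h4 : f (g t) * (N:ℝ)^(d-1) ≤ (esum d N (Fin.tail c) (fun x => τ (Fin.cons t x)) : ℝ) := by
        simpa [hg, hQd] using h3
      calc (N:ℝ)^d * f (g t) ≤ ((N:ℝ)^(d-1) * N) * f (g t) :=
            mul_le_mul_of_nonneg_right hpow (f_nonneg _)
        _ = (N:ℝ) * (f (g t) * (N:ℝ)^(d-1)) := by ring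
        _ ≤ (N:ℝ) * (esum d N (Fin.tail c) (fun x => τ (Fin.cons t x)) : ℝ) := by
            exact mul_le_mul_of_nonneg_left h4 (le_of_lt hNR)
    have hcross : (N:ℝ)^d * V ≤
        ∑ r ∈ Finset.Ico (c 0) (c 0 + (N:ℤ) - 1), ∑ x ∈ Qd,
          |(τ (Fin.cons (r+1) x) : ℝ) - (τ (Fin.cons r x) : ℝ)| := by
      rw [hV, Finset.mul_sum]
      refine Finset.sum_le_sum fun r _ => ?_
      have h5 : (N:ℝ)^d * |g (r+1) - g r| =
          |∑ x ∈ Qd, ((τ (Fin.cons (r+1) x) : ℝ) - (τ (Fin.cons r x) : ℝ))| := by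
        rw [hg, Finset.sum_sub_distrib]
        rw [div_sub_div_same, abs_div, abs_of_pos hK]
        field_simp
      rw [h5]
      exact Finset.abs_sum_le_sum_abs _ _
    -- assemble
    have hdec := esum_decomp d N c τ
    have hmain : (N:ℝ)^d * ((N:ℝ) * f A) ≤ (N:ℝ) * (esum (d+1) N c τ : ℝ) := by
      have e1 : (N:ℝ)^d * ((N:ℝ) * f A) ≤ (N:ℝ)^d * ((∑ t ∈ I, f (g t)) + (N:ℝ) * V) :=
        mul_le_mul_of_nonneg_left hfA (le_of_lt hK)
      have e2 : (N:ℝ)^d * (∑ t ∈ I, f (g t)) ≤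
          (N:ℝ) * ∑ t ∈ I, (esum d N (Fin.tail c) (fun x => τ (Fin.cons t x)) : ℝ) := by
        rw [Finset.mul_sum, Finset.mul_sum]
        exact Finset.sum_le_sum fun t _ => hIH t
      have e3 : (N:ℝ)^d * ((N:ℝ) * V) ≤ (N:ℝ) *
          (∑ r ∈ Finset.Ico (c 0) (c 0 + (N:ℤ) - 1), ∑ x ∈ Qd,
            |(τ (Fin.cons (r+1) x) : ℝ) - (τ (Fin.cons r x) : ℝ)|) := by
        have := mul_le_mul_of_nonneg_left hcross (le_of_lt hNR)
        calc (N:ℝ)^d * ((N:ℝ) * V) = (N:ℝ) * ((N:ℝ)^d * V) := by ring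
          _ ≤ _ := this
      have e4 : (esum (d+1) N c τ : ℝ) =
          (∑ r ∈ Finset.Ico (c 0) (c 0 + (N:ℤ) - 1), ∑ x ∈ Qd,
            |(τ (Fin.cons (r+1) x) : ℝ) - (τ (Fin.cons r x) : ℝ)|) +
          ∑ t ∈ I, (esum d N (Fin.tail c) (fun x => τ (Fin.cons t x)) : ℝ) := by
        rw [hdec]
        push_cast
        ring
      rw [e4]
      rw [mul_add] at e1 ⊢
      calc (N:ℝ)^d * ((N:ℝ) * f A)
          ≤ (N:ℝ)^d * (∑ t ∈ I, f (g t)) + (N:ℝ)^d * ((N:ℝ) * V) := by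
            exact e1
        _ ≤ _ := by
            rw [add_comm ((N:ℝ) * _)]
            exact add_le_add e2 e3
    have hfin : f A * (N:ℝ)^d ≤ (esum (d+1) N c τ : ℝ) := by
      have h6 : (N:ℝ) * (f A * (N:ℝ)^d) ≤ (N:ℝ) * (esum (d+1) N c τ : ℝ) := by
        calc (N:ℝ) * (f A * (N:ℝ)^d) = (N:ℝ)^d * ((N:ℝ) * f A) := by ring
          _ ≤ _ := hmain
      exact le_of_mul_le_mul_left h6 hNR
    simpa [hA] using hfin

end DFProof
namespace DFProof
open DF

lemma baseAdj_single {d : ℕ} (w : Base d) (i : Fin d) : baseAdj w (w + Pi.single i 1) := by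
  unfold baseAdj dist1
  have h : ∀ j : Fin d, |w j - (w + Pi.single i 1 : Base d) j| = if j = i then 1 else 0 := by
    intro j
    have e : (w + Pi.single i 1 : Base d) j = w j + (if j = i then 1 else 0) := by
      simp [Pi.single_apply]
    rw [e]
    split_ifs <;> simp
  rw [Finset.sum_congr rfl (fun j _ => h j)]
  simp

lemma adj_structure {d : ℕ} {u v : Base d} (h : baseAdj u v) :
    ∃ i, v = u + Pi.single i 1 ∨ u = v + Pi.single i 1 := by
  unfold baseAdj dist1 at h
  have h1 : ∃ i ∈ Finset.univ, (1:ℤ) ≤ |u i - v i| := by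
    by_contra hc
    push_neg at hc
    have : ∑ i, |u i - v i| ≤ 0 :=
      Finset.sum_nonpos fun i hi => by have := hc i hi; omega
    omega
  obtain ⟨i, -, hi⟩ := h1
  have htot : |u i - v i| + ∑ j ∈ Finset.univ.erase i, |u j - v j| = 1 :=
    (Finset.add_sum_erase Finset.univ (fun k => |u k - v k|) (Finset.mem_univ i)).trans h
  have hnn : ∀ j ∈ Finset.univ.erase i, (0:ℤ) ≤ |u j - v j| := fun j _ => abs_nonneg _
  have hsum0 : ∑ j ∈ Finset.univ.erase i, |u j - v j| = 0 :=
    le_antisymm (by omega) (Finset.sum_nonneg hnn)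
  have hz : ∀ j, j ≠ i → u j = v j := by
    intro j hj
    have h6 := (Finset.sum_eq_zero_iff_of_nonneg hnn).1 hsum0 j (by simp [hj])
    have := abs_eq_zero.1 h6
    omega
  have hione : |u i - v i| = 1 := by omega
  rcases (abs_eq (by norm_num : (0:ℤ) ≤ 1)).1 hione with h2 | h2
  · refine ⟨i, Or.inr ?_⟩
    funext j
    by_cases hj : j = i
    · subst hj
      have e : (v + Pi.single j 1 : Base d) j = v j + 1 := by simp
      rw [e]; omega
    · have e : (v + Pi.single i 1 : Base d) j = v j := by simp [Pi.single_eq_of_ne hj]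
      rw [e, hz j hj]
  · refine ⟨i, Or.inl ?_⟩
    funext j
    by_cases hj : j = i
    · subst hj
      have e : (u + Pi.single j 1 : Base d) j = u j + 1 := by simp
      rw [e]; omega
    · have e : (u + Pi.single i 1 : Base d) j = u j := by simp [Pi.single_eq_of_ne hj]
      rw [e, hz j hj]

lemma tvon_eq (d N : ℕ) (c : Base d) (τ : Base d → ℤ) :
    TVon τ (cubeFinset N c : Set (Base d)) = esum d N c τ := by
  classical
  have hsetEq : {e : Sym2 (Base d) | IsBaseEdge e ∧ ∀ x ∈ e, x ∈ (cubeFinset N c : Set (Base d))}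
      = ↑(((cubeFinset N c ×ˢ Finset.univ).filter
            (fun p : Base d × Fin d => p.1 + Pi.single p.2 1 ∈ cubeFinset N c)).image
          (fun p : Base d × Fin d => s(p.1, p.1 + Pi.single p.2 1))) := by
    ext e
    constructor
    · rintro ⟨⟨u, v, hadj, rfl⟩, hmem⟩
      have hu : u ∈ cubeFinset N c := hmem u (Sym2.mem_mk_left u v)
      have hv : v ∈ cubeFinset N c := hmem v (Sym2.mem_mk_right u v)
      refine Finset.mem_coe.2 (Finset.mem_image.2 ?_)
      obtain ⟨i, hcase | hcase⟩ := adj_structure hadj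
      · exact ⟨(u, i), Finset.mem_filter.2 ⟨Finset.mem_product.2 ⟨hu, Finset.mem_univ _⟩,
          by rw [← hcase]; exact hv⟩, by rw [← hcase]⟩
      · refine ⟨(v, i), Finset.mem_filter.2 ⟨Finset.mem_product.2 ⟨hv, Finset.mem_univ _⟩,
          by rw [← hcase]; exact hu⟩, ?_⟩
        show s(v, v + Pi.single i 1) = s(u, v)
        rw [← hcase, Sym2.eq_swap]
    · intro he
      obtain ⟨⟨w, i⟩, hp, rfl⟩ := Finset.mem_image.1 (Finset.mem_coe.1 he)
      have hp' := Finset.mem_filter.1 hp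
      have hw : w ∈ cubeFinset N c := (Finset.mem_product.1 hp'.1).1
      have hwi : w + Pi.single i 1 ∈ cubeFinset N c := hp'.2
      refine ⟨⟨w, w + Pi.single i 1, baseAdj_single w i, rfl⟩, ?_⟩
      intro x hx
      rcases Sym2.mem_iff.1 hx with rfl | rfl
      · exact hw
      · exact hwi
  have hinj : ∀ p ∈ (cubeFinset N c ×ˢ Finset.univ).filter
        (fun p : Base d × Fin d => p.1 + Pi.single p.2 1 ∈ cubeFinset N c),
      ∀ q ∈ (cubeFinset N c ×ˢ Finset.univ).filter
        (fun p : Base d × Fin d => p.1 + Pi.single p.2 1 ∈ cubeFinset N c),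
      (fun p : Base d × Fin d => s(p.1, p.1 + Pi.single p.2 1)) p =
      (fun p : Base d × Fin d => s(p.1, p.1 + Pi.single p.2 1)) q → p = q := by
    rintro ⟨w, i⟩ - ⟨w', j⟩ - heq
    simp only at heq
    rw [Sym2.eq_iff] at heq
    rcases heq with ⟨h1, h2⟩ | ⟨h1, h2⟩
    · subst h1
      have h3 : (Pi.single i 1 : Base d) = Pi.single j 1 := add_left_cancel h2
      by_cases hij : i = j
      · simp [hij]
      · exfalso
        have h4 := congrFun h3 i
        rw [Pi.single_eq_same, Pi.single_eq_of_ne hij] at h4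
        exact one_ne_zero h4
    · exfalso
      have h4 : w' = w' + Pi.single j 1 + Pi.single i 1 := by
        nth_rewrite 1 [← h2]
        rw [h1]
      have h5 := congrFun h4 j
      have e1 : (w' + Pi.single j 1 + Pi.single i 1 : Base d) j
          = w' j + 1 + (Pi.single i 1 : Base d) j := by
        simp
      have e2 : (0:ℤ) ≤ (Pi.single i 1 : Base d) j := by
        rcases eq_or_ne j i with rfl | hji
        · simp
        · simp [Pi.single_eq_of_ne hji]
      rw [e1] at h5
      omega
  rw [TVon, hsetEq, finsum_mem_coe_finset, Finset.sum_image hinj]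
  have hterm : ∀ p : Base d × Fin d,
      pairAbsDiff τ s(p.1, p.1 + Pi.single p.2 1) = |τ (p.1 + Pi.single p.2 1) - τ p.1| := by
    intro p
    rw [pairAbsDiff, Sym2.lift_mk]
    exact abs_sub_comm _ _
  rw [Finset.sum_congr rfl fun p _ => hterm p]
  rw [Finset.sum_filter, Finset.sum_product, esum]

end DFProof

/-- If `|τ^rough_N(Nu) − τ_N(Nu)| > α` for some `0 < α < 1/2`, then
`TV(τ; Q_N(Nu)) ≥ (2α/3) N^{d−1}`. -/
theorem rounding_gap_forces_variation
    (d : ℕ) (hd : 1 ≤ d) (τ : Base d → ℤ) (hτ : IsShift τ) (N : ℕ) (hN : 0 < N)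
    (α : ℝ) (hα0 : 0 < α) (hα1 : α < 1 / 2) (u : Base d)
    (h : α < |roughAvg N τ (fun i => (N : ℤ) * u i) -
        (coarse N τ (fun i => (N : ℤ) * u i) : ℝ)|) :
    (2 * α / 3) * (N : ℝ) ^ (d - 1) ≤
      (TVon τ (cubeFinset N (fun i => (N : ℤ) * u i) : Set (Base d)) : ℝ) := by
  classical
  set c : Base d := fun i => (N : ℤ) * u i with hc
  have hcube : cubePt N c = c := by
    funext i
    show (N:ℤ) * Int.fdiv ((N:ℤ) * u i) N = (N:ℤ) * u i
    rw [Int.mul_fdiv_cancel_left _ (by exact_mod_cast hN.ne')]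
  have hra : roughAvg N τ c = (∑ w ∈ cubeFinset N c, (τ w : ℝ)) / (N:ℝ)^d := by
    rw [roughAvg, hcube]
  have hfh : α < DFProof.f (roughAvg N τ c) := h
  have hcore := DFProof.core d N hN c τ
  rw [← hra] at hcore
  have htv := DFProof.tvon_eq d N c τ
  have hX : (0:ℝ) ≤ (N:ℝ)^(d-1) := by positivity
  calc (2 * α / 3) * (N : ℝ) ^ (d - 1) ≤ α * (N : ℝ) ^ (d - 1) :=
        mul_le_mul_of_nonneg_right (by linarith) hX
    _ ≤ DFProof.f (roughAvg N τ c) * (N : ℝ) ^ (d - 1) :=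
        mul_le_mul_of_nonneg_right (le_of_lt hfh) hX
    _ ≤ (DFProof.esum d N c τ : ℝ) := hcore
    _ = (TVon τ (cubeFinset N c : Set (Base d)) : ℝ) := by rw [htv]
end

section
/- Let d ≥ 1 and let τ : ℤ^d → ℤ be a shift. For each integer 0 ≤ r ≤ d there exists a set I ⊆ [d] with |I| = r that is compatible with τ, i.e., TV(τ_I) ≤ 20·(2|I|+1)·TV(τ) and ‖τ_I − τ‖₁ ≤ (4|I|/d)·TV(τ). -/
namespace DF

/-- The base point of the box of the partition `𝒫_I` containing `u`: side 2 in the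
directions of `I`, side 1 elsewhere. -/
def cellPt {d : ℕ} (I : Finset (Fin d)) (u : Base d) : Base d :=
  fun i => if i ∈ I then 2 * Int.fdiv (u i) 2 else u i

/-- The box `c + {0,1}^I × {0}^{[d]∖I}` of the partition `𝒫_I` as a finset. -/
noncomputable def cellFinset {d : ℕ} (I : Finset (Fin d)) (c : Base d) : Finset (Base d) :=
  Fintype.piFinset fun i => if i ∈ I then Finset.Ico (c i) (c i + 2) else {c i}

/-- The fine graining `τ_I`. -/
noncomputable def fine {d : ℕ} (I : Finset (Fin d)) (τ : Base d → ℤ) (u : Base d) : ℤ :=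
  nearestInt ((∑ w ∈ cellFinset I (cellPt I u), (τ w : ℝ)) / 2 ^ I.card)

end DF

open DF
namespace DF

open Function Set

variable {d : ℕ}

/-- unit vector -/
def dlt (j : Fin d) : Base d := Pi.single j 1

lemma dlt_apply (j i : Fin d) : dlt j i = if i = j then 1 else 0 := by
  simp [dlt, Pi.single_apply]

/-- edge weight indexed by (direction, lower endpoint) -/
def gE (τ : Base d → ℤ) (p : Fin d × Base d) : ℤ := |τ (p.2 + dlt p.1) - τ p.2|

lemma gE_nonneg (τ : Base d → ℤ) (p : Fin d × Base d) : 0 ≤ gE τ p := abs_nonneg _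

lemma nearestInt_intCast (k : ℤ) : nearestInt (k : ℝ) = k := by
  rw [nearestInt, Int.ceil_eq_iff] <;> push_cast <;> constructor <;> linarith

lemma nearestInt_zero : nearestInt 0 = 0 := by
  simpa using nearestInt_intCast 0

lemma abs_nearestInt_sub (a : ℝ) : |(nearestInt a : ℝ) - a| ≤ 1 / 2 := by
  have h1 : a - 1/2 ≤ (nearestInt a : ℝ) := Int.le_ceil _
  have h2 : ((nearestInt a : ℝ)) < (a - 1/2) + 1 := Int.ceil_lt_add_one _
  rw [abs_le]; constructor <;> linarith

lemma abs_nearestInt_sub_int (a : ℝ) (k : ℤ) :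
    |(nearestInt a : ℝ) - k| ≤ 2 * |a - k| := by
  rcases eq_or_ne (nearestInt a) k with h | h
  · rw [h, sub_self, abs_zero]; positivity
  · have h1 : (1 : ℝ) ≤ |(nearestInt a : ℝ) - k| := by
      have : (1 : ℤ) ≤ |nearestInt a - k| := by
        rcases abs_pos.mpr (sub_ne_zero.mpr h) with h'
        omega
      calc (1:ℝ) = ((1:ℤ):ℝ) := by norm_num
        _ ≤ ((|nearestInt a - k| : ℤ) : ℝ) := by exact_mod_cast this
        _ = |(nearestInt a : ℝ) - k| := by push_cast; ring_nf
    have h2 := abs_nearestInt_sub a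
    have h3 : |(nearestInt a : ℝ) - k| ≤ |(nearestInt a : ℝ) - a| + |a - k| := abs_sub_le _ a _
    have h4 : (1:ℝ)/2 ≤ |a - k| := by linarith
    linarith

end DF
namespace DF

variable {d : ℕ}

lemma mem_cellFinset {I : Finset (Fin d)} {c u : Base d} :
    u ∈ cellFinset I c ↔
      ∀ i, (i ∈ I → c i ≤ u i ∧ u i < c i + 2) ∧ (i ∉ I → u i = c i) := by
  simp only [cellFinset, Fintype.mem_piFinset]
  constructor
  · intro h i
    have := h i
    by_cases hi : i ∈ I <;> simp [hi] at this ⊢ <;> omega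
  · intro h i
    have := h i
    by_cases hi : i ∈ I <;> simp [hi] at this ⊢ <;> omega

lemma fdiv_two_le (a : ℤ) : 2 * Int.fdiv a 2 ≤ a ∧ a < 2 * Int.fdiv a 2 + 2 := by
  rw [Int.fdiv_eq_ediv_of_nonneg _ (by norm_num)]
  omega

lemma mem_cellPt (I : Finset (Fin d)) (u : Base d) : u ∈ cellFinset I (cellPt I u) := by
  rw [mem_cellFinset]
  intro i
  refine ⟨fun hi => ?_, fun hi => ?_⟩ <;> simp only [cellPt, hi, if_true, if_false]
  · exact fdiv_two_le (u i)

lemma cellPt_even {I : Finset (Fin d)} {i : Fin d} (hi : i ∈ I) (u : Base d) :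
    2 ∣ cellPt I u i := by
  simp [cellPt, hi]

lemma cellPt_eq_of_mem {I : Finset (Fin d)} {c u : Base d}
    (hc : ∀ i ∈ I, 2 ∣ c i) (hu : u ∈ cellFinset I c) : cellPt I u = c := by
  rw [mem_cellFinset] at hu
  funext i
  rcases hu i with ⟨h1, h2⟩
  by_cases hi : i ∈ I
  · have := h1 hi
    have hd2 := hc i hi
    simp only [cellPt, hi, if_pos]
    rw [Int.fdiv_eq_ediv_of_nonneg _ (by norm_num)]
    omega
  · simp [cellPt, hi, h2 hi]

lemma cellPt_eq_cellPt {I : Finset (Fin d)} {u v : Base d}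
    (hv : v ∈ cellFinset I (cellPt I u)) : cellPt I v = cellPt I u :=
  cellPt_eq_of_mem (fun i hi => cellPt_even hi u) hv

lemma cellFinset_empty (c : Base d) : cellFinset (∅ : Finset (Fin d)) c = {c} := by
  ext u
  simp [mem_cellFinset, funext_iff]

lemma card_cellFinset (I : Finset (Fin d)) (c : Base d) :
    (cellFinset I c).card = 2 ^ I.card := by
  rw [cellFinset, Fintype.card_piFinset]
  have : ∀ i, (if i ∈ I then Finset.Ico (c i) (c i + 2) else {c i}).card
      = if i ∈ I then 2 else 1 := by
    intro i
    by_cases hi : i ∈ I <;> simp [hi, Int.card_Ico]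
  simp only [this]
  rw [Finset.prod_ite_mem, Finset.univ_inter, Finset.prod_const]

end DF
namespace DF

variable {d : ℕ}

lemma cellFinset_insert {I : Finset (Fin d)} {j : Fin d} (hj : j ∉ I) (c : Base d) :
    cellFinset (insert j I) c
      = cellFinset I c ∪ (cellFinset I c).image (· + dlt j) := by
  ext u
  simp only [Finset.mem_union, Finset.mem_image, mem_cellFinset, Finset.mem_insert]
  constructor
  · intro h
    by_cases hja : u j = c j
    · left
      intro i
      rcases h i with ⟨h1, h2⟩
      refine ⟨fun hiI => h1 (Or.inr hiI), fun hiI => ?_⟩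
      rcases eq_or_ne i j with rfl | hij
      · exact hja
      · exact h2 (by tauto)
    · right
      refine ⟨u - dlt j, fun i => ?_, by simp⟩
      have key : ∀ i, (u - dlt j) i = u i - (if i = j then 1 else 0) := by
        intro i; simp [dlt_apply]
      rcases eq_or_ne i j with rfl | hij
      · have h1 := (h i).1 (Or.inl rfl)
        refine ⟨fun hiI => absurd hiI hj, fun _ => ?_⟩
        rw [key i, if_pos rfl]
        omega
      · rcases h i with ⟨h1, h2⟩
        refine ⟨fun hiI => ?_, fun hiI => ?_⟩
        · have := h1 (Or.inr hiI)
          rw [key i, if_neg hij]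
          omega
        · have := h2 (by tauto)
          rw [key i, if_neg hij]
          omega
  · have key : ∀ (v : Base d) i, (v + dlt j) i = v i + (if i = j then 1 else 0) := by
      intro v i; simp [dlt_apply]
    rintro (h | ⟨v, hv, rfl⟩) <;> intro i
    · rcases h i with ⟨h1, h2⟩
      refine ⟨fun hiI => ?_, fun hiI => h2 fun hiI' => hiI (Or.inr hiI')⟩
      rcases hiI with rfl | hiI
      · have := h2 hj; omega
      · exact h1 hiI
    · rcases hv i with ⟨h1, h2⟩
      rcases eq_or_ne i j with rfl | hij
      · have := h2 hj
        refine ⟨fun _ => ?_, fun hni => absurd (Or.inl rfl) hni⟩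
        rw [key v i, if_pos rfl]
        omega
      · refine ⟨fun hiI => ?_, fun hni => ?_⟩
        · have := h1 (by tauto)
          rw [key v i, if_neg hij]
          omega
        · have := h2 (by tauto)
          rw [key v i, if_neg hij]
          omega

lemma disjoint_cell_image {I : Finset (Fin d)} {j : Fin d} (hj : j ∉ I) (c : Base d) :
    Disjoint (cellFinset I c) ((cellFinset I c).image (· + dlt j)) := by
  rw [Finset.disjoint_left]
  intro u hu hu'
  rcases Finset.mem_image.mp hu' with ⟨v, hv, rfl⟩
  have h1 := ((mem_cellFinset.mp hu) j).2 hj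
  have h2 := ((mem_cellFinset.mp hv) j).2 hj
  have : (v + dlt j) j = v j + 1 := by simp [dlt_apply]
  omega

end DF
namespace DF

variable {d : ℕ}

lemma cube_pairs (I : Finset (Fin d)) (c : Base d) :
    ∀ f : Base d → ℝ,
      (∑ v ∈ cellFinset I c, ∑ w ∈ cellFinset I c, |f v - f w|)
        ≤ 2 ^ I.card *
          ∑ j ∈ I, ∑ u ∈ (cellFinset I c).filter (fun u => u j = c j),
            |f (u + dlt j) - f u| := by
  classical
  induction I using Finset.induction_on with
  | empty => intro f; simp [cellFinset_empty]
  | @insert j I hj ih =>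
    intro f
    have hdecomp := cellFinset_insert hj c
    have hdisj := disjoint_cell_image hj c
    have hinj : Function.Injective (· + dlt j) := add_left_injective _
    set B := cellFinset I c with hB
    have himg : ∀ h : Base d → ℝ,
        ∑ w ∈ B.image (· + dlt j), h w = ∑ w ∈ B, h (w + dlt j) :=
      fun h => Finset.sum_image fun a _ b _ hab => hinj hab
    set N : ℝ := (2 : ℝ) ^ I.card with hNdef
    have hN : (0:ℝ) ≤ N := by positivity
    have hcard : (B.card : ℝ) = N := by rw [hB, card_cellFinset]; push_cast; rfl
    set fp : Base d → ℝ := fun v => f (v + dlt j) with hfp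
    set Qf := ∑ v ∈ B, ∑ w ∈ B, |f v - f w| with hQf
    set Qfp := ∑ v ∈ B, ∑ w ∈ B, |fp v - fp w| with hQfp
    set D := ∑ v ∈ B, |f (v + dlt j) - f v| with hD
    set Rf := ∑ j' ∈ I, ∑ u ∈ B.filter (fun u => u j' = c j'), |f (u + dlt j') - f u|
      with hRf
    set Rfp := ∑ j' ∈ I, ∑ u ∈ B.filter (fun u => u j' = c j'), |fp (u + dlt j') - fp u|
      with hRfp
    have sA : ∑ v ∈ B, ∑ w ∈ B, |f (v + dlt j) - f v| = N * D := by
      calc ∑ v ∈ B, ∑ w ∈ B, |f (v + dlt j) - f v|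
          = ∑ v ∈ B, (B.card : ℝ) * |f (v + dlt j) - f v| := by
            simp [Finset.sum_const, nsmul_eq_mul]
        _ = (B.card : ℝ) * D := by rw [hD, Finset.mul_sum]
        _ = N * D := by rw [hcard]
    have sE : ∑ v ∈ B, ∑ w ∈ B, |f (w + dlt j) - f w| = N * D := by
      rw [← hD, Finset.sum_const, nsmul_eq_mul, hcard]
    -- cross term bound
    have cross : (∑ v ∈ B, ∑ w ∈ B, |f v - fp w|) ≤ N * D + Qf / 2 + Qfp / 2 := by
      have hterm : ∀ v ∈ B, ∀ w ∈ B, |f v - fp w| ≤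
          (|f (v + dlt j) - f v| + |fp v - fp w|) / 2
          + (|f v - f w| + |f (w + dlt j) - f w|) / 2 := by
        intro v _ w _
        have t1 : |f v - fp w| ≤ |f v - fp v| + |fp v - fp w| := abs_sub_le _ _ _
        have t2 : |f v - fp w| ≤ |f v - f w| + |f w - fp w| := abs_sub_le _ _ _
        have e1 : |f v - fp v| = |f (v + dlt j) - f v| := by rw [hfp]; exact abs_sub_comm _ _
        have e2 : |f w - fp w| = |f (w + dlt j) - f w| := by rw [hfp]; exact abs_sub_comm _ _
        rw [e1] at t1; rw [e2] at t2
        linarith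
      calc (∑ v ∈ B, ∑ w ∈ B, |f v - fp w|)
          ≤ ∑ v ∈ B, ∑ w ∈ B, ((|f (v + dlt j) - f v| + |fp v - fp w|) / 2
              + (|f v - f w| + |f (w + dlt j) - f w|) / 2) :=
            Finset.sum_le_sum fun v hv => Finset.sum_le_sum fun w hw => hterm v hv w hw
        _ = N * D + Qf / 2 + Qfp / 2 := by
            have e4 : ∀ a b c' e' : ℝ, (a + b) / 2 + (c' + e') / 2
                = a / 2 + b / 2 + c' / 2 + e' / 2 := by intros; ring
            simp only [e4, Finset.sum_add_distrib, ← Finset.sum_div]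
            rw [sA, sE, ← hQf, ← hQfp]
            ring
    have cross2 : ∑ v ∈ B, ∑ w ∈ B, |fp v - f w| = ∑ v ∈ B, ∑ w ∈ B, |f v - fp w| := by
      rw [Finset.sum_comm]
      exact Finset.sum_congr rfl fun v _ => Finset.sum_congr rfl fun w _ => abs_sub_comm _ _
    -- LHS expansion
    have expand : (∑ v ∈ cellFinset (insert j I) c, ∑ w ∈ cellFinset (insert j I) c, |f v - f w|)
        = Qf + (∑ v ∈ B, ∑ w ∈ B, |f v - fp w|) * 2 + Qfp := by
      rw [hdecomp, Finset.sum_union hdisj]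
      have inner : ∀ g : Base d → Base d → ℝ, ∀ s : Finset (Base d),
          (∑ v ∈ s, ∑ w ∈ B ∪ B.image (· + dlt j), g v w)
            = (∑ v ∈ s, ∑ w ∈ B, g v w) + ∑ v ∈ s, ∑ w ∈ B, g v (w + dlt j) := by
        intro g s
        rw [← Finset.sum_add_distrib]
        exact Finset.sum_congr rfl fun v _ => by rw [Finset.sum_union hdisj, himg]
      rw [inner, inner, himg (fun v => ∑ w ∈ B, |f v - f w|),
        himg (fun v => ∑ w ∈ B, |f v - f (w + dlt j)|)]
      have : ∑ v ∈ B, ∑ w ∈ B, |f (v + dlt j) - f w| = ∑ v ∈ B, ∑ w ∈ B, |f v - fp w| := by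
        rw [← cross2]
      rw [this]
      have : ∑ v ∈ B, ∑ w ∈ B, |f (v + dlt j) - f (w + dlt j)| = Qfp := rfl
      rw [this, ← hQf]
      ring
    -- RHS computation
    have filterj : (cellFinset (insert j I) c).filter (fun u => u j = c j) = B := by
      rw [hdecomp, Finset.filter_union, Finset.filter_image]
      have h1 : B.filter (fun u => u j = c j) = B := by
        apply Finset.filter_true_of_mem
        intro u hu
        exact ((mem_cellFinset.mp hu) j).2 hj
      have h2 : B.filter (fun u => (u + dlt j) j = c j) = ∅ := by
        apply Finset.filter_false_of_mem
        intro u hu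
        have := ((mem_cellFinset.mp hu) j).2 hj
        have hadd : (u + dlt j) j = u j + 1 := by simp [dlt_apply]
        omega
      rw [h1, h2, Finset.image_empty, Finset.union_empty]
    have filterj' : ∀ j' ∈ I,
        (∑ u ∈ (cellFinset (insert j I) c).filter (fun u => u j' = c j'),
          |f (u + dlt j') - f u|)
        = (∑ u ∈ B.filter (fun u => u j' = c j'), |f (u + dlt j') - f u|)
          + ∑ u ∈ B.filter (fun u => u j' = c j'), |fp (u + dlt j') - fp u| := by
      intro j' hj'
      have hne : j' ≠ j := fun h => hj (h ▸ hj')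
      rw [hdecomp, Finset.filter_union, Finset.filter_image]
      have hpf : B.filter (fun u => (u + dlt j) j' = c j') = B.filter (fun u => u j' = c j') := by
        apply Finset.filter_congr
        intro u _
        have hadd : (u + dlt j) j' = u j' := by simp [dlt_apply, hne]
        rw [hadd]
      rw [hpf]
      have hdisj2 : Disjoint (B.filter (fun u => u j' = c j'))
          ((B.filter (fun u => u j' = c j')).image (· + dlt j)) :=
        hdisj.mono (Finset.filter_subset _ _)
          (Finset.image_subset_image (Finset.filter_subset _ _))
      rw [Finset.sum_union hdisj2, Finset.sum_image fun a _ b _ hab => hinj hab]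
      congr 1
      refine Finset.sum_congr rfl fun u _ => ?_
      rw [hfp]
      have : u + dlt j + dlt j' = u + dlt j' + dlt j := by rw [add_right_comm]
      rw [this]
    have RHSeq : (2:ℝ) ^ (insert j I).card *
        (∑ j' ∈ insert j I, ∑ u ∈ (cellFinset (insert j I) c).filter (fun u => u j' = c j'),
          |f (u + dlt j') - f u|)
        = 2 * N * (D + Rf + Rfp) := by
      rw [Finset.card_insert_of_notMem hj, pow_succ, Finset.sum_insert hj, filterj]
      rw [Finset.sum_congr rfl filterj', Finset.sum_add_distrib, ← hRf, ← hRfp, ← hD]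
      ring
    rw [expand, RHSeq]
    have h1 := ih f
    have h2 := ih fp
    rw [← hQf, ← hRf] at h1
    rw [← hQfp, ← hRfp] at h2
    nlinarith [cross, h1, h2, hN]

end DF
namespace DF

variable {d : ℕ}

def edgeOf (p : Fin d × Base d) : Sym2 (Base d) := s(p.2, p.2 + dlt p.1)

lemma dist1_dlt (u : Base d) (j : Fin d) : dist1 u (u + dlt j) = 1 := by
  have : ∀ i, |u i - (u + dlt j) i| = if i = j then 1 else 0 := by
    intro i
    by_cases h : i = j <;> simp [dlt_apply, h]
  rw [dist1]
  simp only [this]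
  simp

lemma dist1_comm (u v : Base d) : dist1 u v = dist1 v u := by
  unfold dist1
  exact Finset.sum_congr rfl fun i _ => abs_sub_comm _ _

lemma baseAdj_iff {u v : Base d} :
    baseAdj u v ↔ ∃ j, v = u + dlt j ∨ u = v + dlt j := by
  constructor
  · intro h
    rw [baseAdj, dist1] at h
    have hex : ∃ j, u j ≠ v j := by
      by_contra hno
      push_neg at hno
      have : ∀ i ∈ Finset.univ, |u i - v i| = 0 := fun i _ => by rw [hno i]; simp
      rw [Finset.sum_congr rfl this] at h
      simp at h
    obtain ⟨j, hj⟩ := hex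
    have hsplit : ∑ i ∈ Finset.univ.erase j, |u i - v i| + |u j - v j|
        = ∑ i, |u i - v i| := Finset.sum_erase_add _ _ (Finset.mem_univ j)
    have h1 : 1 ≤ |u j - v j| := by
      have := abs_pos.mpr (sub_ne_zero.mpr hj)
      omega
    have hz : ∑ i ∈ Finset.univ.erase j, |u i - v i| = 0 := by
      have hnn : ∀ i ∈ Finset.univ.erase j, 0 ≤ |u i - v i| := fun i _ => abs_nonneg _
      have := Finset.sum_nonneg hnn
      omega
    have hall : ∀ i ∈ Finset.univ.erase j, |u i - v i| = 0 :=
      (Finset.sum_eq_zero_iff_of_nonneg fun i _ => abs_nonneg _).mp hz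
    have heq : ∀ i, i ≠ j → u i = v i := by
      intro i hi
      have := hall i (Finset.mem_erase.mpr ⟨hi, Finset.mem_univ i⟩)
      have := abs_eq_zero.mp this
      omega
    have habs : |u j - v j| = 1 := by omega
    refine ⟨j, ?_⟩
    rcases abs_eq (by norm_num : (0:ℤ) ≤ 1) |>.mp habs with hc | hc
    · right
      funext i
      rcases eq_or_ne i j with rfl | hij
      · simp [dlt_apply]; omega
      · simp [dlt_apply, hij, (heq i hij).symm]
    · left
      funext i
      rcases eq_or_ne i j with rfl | hij
      · simp [dlt_apply]; omega
      · simp [dlt_apply, hij, heq i hij]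
  · rintro ⟨j, rfl | rfl⟩
    · exact dist1_dlt _ _
    · show dist1 _ _ = 1
      rw [dist1_comm]
      exact dist1_dlt _ _

lemma isBaseEdge_iff {e : Sym2 (Base d)} :
    IsBaseEdge e ↔ e ∈ Set.range (edgeOf (d := d)) := by
  constructor
  · rintro ⟨u, v, hadj, rfl⟩
    rcases baseAdj_iff.mp hadj with ⟨j, rfl | rfl⟩
    · exact ⟨(j, u), rfl⟩
    · exact ⟨(j, v), Sym2.eq_swap⟩
  · rintro ⟨p, rfl⟩
    exact ⟨p.2, p.2 + dlt p.1, baseAdj_iff.mpr ⟨p.1, Or.inl rfl⟩, rfl⟩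

lemma dlt_ne_zero_at (j : Fin d) : dlt j j = 1 := by simp [dlt_apply]

lemma edgeOf_injective : Function.Injective (edgeOf (d := d)) := by
  rintro ⟨j, u⟩ ⟨j', u'⟩ h
  simp only [edgeOf] at h
  rw [Sym2.eq_iff] at h
  rcases h with ⟨h1, h2⟩ | ⟨h1, h2⟩
  · subst h1
    have hd : dlt j = dlt j' := by
      have := congrArg (· - u) h2
      simpa using this
    have : j = j' := by
      by_contra hne
      have := congrFun hd j
      rw [dlt_ne_zero_at, dlt_apply, if_neg hne] at this
      exact one_ne_zero this
    simp [this]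
  · exfalso
    have : u' j = u' j + dlt j' j + 1 := by
      have := congrFun h2 j
      have h1j := congrFun h1 j
      simp only [Pi.add_apply] at this h1j ⊢
      rw [h1j, dlt_ne_zero_at] at this
      omega
    have hnn : 0 ≤ dlt j' j := by
      rw [dlt_apply]
      split <;> norm_num
    omega

lemma TV_eq (τ : Base d → ℤ) : TV τ = ∑ᶠ p : Fin d × Base d, gE τ p := by
  rw [TV]
  have hset : {e : Sym2 (Base d) | IsBaseEdge e} = Set.range (edgeOf (d := d)) :=
    Set.ext fun e => isBaseEdge_iff
  rw [hset, finsum_mem_range edgeOf_injective]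
  apply finsum_congr
  intro p
  show pairAbsDiff τ (s(p.2, p.2 + dlt p.1)) = _
  rw [pairAbsDiff, Sym2.lift_mk]
  exact abs_sub_comm _ _

lemma TV_nonneg (τ : Base d → ℤ) : 0 ≤ TV τ := by
  rw [TV_eq]
  exact finsum_nonneg (gE_nonneg τ)

end DF
namespace DF

open Function

variable {d : ℕ}

lemma sum_le_sum_support {α : Type*} [DecidableEq α] {s t : Finset α} (f : α → ℝ)
    (hf : ∀ a, 0 ≤ f a) (hsupp : ∀ a, f a ≠ 0 → a ∈ t) :
    ∑ a ∈ s, f a ≤ ∑ a ∈ t, f a := by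
  have h1 : ∑ a ∈ s, f a = ∑ a ∈ s ∩ t, f a := by
    refine (Finset.sum_subset Finset.inter_subset_left ?_).symm
    intro x hx hnx
    by_contra h0
    exact hnx (Finset.mem_inter.mpr ⟨hx, hsupp x h0⟩)
  rw [h1]
  exact Finset.sum_le_sum_of_subset_of_nonneg Finset.inter_subset_right fun a _ _ => hf a

noncomputable def V0 {τ : Base d → ℤ} (hτ : IsShift τ) : Finset (Base d) :=
  hτ.toFinset ∪ (Finset.univ ×ˢ hτ.toFinset).image
    (fun p : Fin d × Base d => p.2 - dlt p.1)

lemma mem_V0_of_ne {τ : Base d → ℤ} (hτ : IsShift τ) {v : Base d} (hv : τ v ≠ 0) :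
    v ∈ V0 hτ :=
  Finset.mem_union_left _ (hτ.mem_toFinset.mpr hv)

lemma gE_support {τ : Base d → ℤ} (hτ : IsShift τ) (p : Fin d × Base d)
    (hp : gE τ p ≠ 0) : p.2 ∈ V0 hτ := by
  have hne : τ (p.2 + dlt p.1) ≠ τ p.2 := fun h => hp (by rw [gE, h, sub_self, abs_zero])
  by_cases h0 : τ p.2 ≠ 0
  · exact mem_V0_of_ne hτ h0
  · push_neg at h0
    have h1 : τ (p.2 + dlt p.1) ≠ 0 := by rw [h0] at hne; exact hne
    refine Finset.mem_union_right _ (Finset.mem_image.mpr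
      ⟨(p.1, p.2 + dlt p.1), ?_, by simp⟩)
    exact Finset.mem_product.mpr ⟨Finset.mem_univ _, hτ.mem_toFinset.mpr h1⟩

lemma TV_eq_sum {τ : Base d → ℤ} (hτ : IsShift τ) {s : Finset (Base d)}
    (hs : V0 hτ ⊆ s) : TV τ = ∑ p ∈ Finset.univ ×ˢ s, gE τ p := by
  rw [TV_eq]
  apply finsum_eq_sum_of_support_subset
  intro p hp
  rw [Function.mem_support] at hp
  exact Finset.mem_coe.mpr
    (Finset.mem_product.mpr ⟨Finset.mem_univ _, hs (gE_support hτ p hp)⟩)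

noncomputable def Wt (τ : Base d → ℤ) (j : Fin d) : ℤ :=
  ∑ᶠ u : Base d, if Even (u j) then gE τ (j, u) else 0

lemma Wt_nonneg (τ : Base d → ℤ) (j : Fin d) : 0 ≤ Wt τ j := by
  refine finsum_nonneg fun u => ?_
  split
  · exact gE_nonneg τ _
  · exact le_refl 0

lemma Wt_eq_sum {τ : Base d → ℤ} (hτ : IsShift τ) {s : Finset (Base d)}
    (hs : V0 hτ ⊆ s) (j : Fin d) :
    Wt τ j = ∑ u ∈ s, if Even (u j) then gE τ (j, u) else 0 := by
  apply finsum_eq_sum_of_support_subset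
  intro u hu
  rw [Function.mem_support] at hu
  have hg : gE τ (j, u) ≠ 0 := by
    intro h
    rw [h] at hu
    simp at hu
  exact hs (gE_support hτ (j, u) hg)

lemma sumWt_le_TV {τ : Base d → ℤ} (hτ : IsShift τ) : ∑ j, Wt τ j ≤ TV τ := by
  rw [TV_eq_sum hτ (subset_refl _), Finset.sum_product]
  refine Finset.sum_le_sum fun j _ => ?_
  rw [Wt_eq_sum hτ (subset_refl _) j]
  refine Finset.sum_le_sum fun u _ => ?_
  split
  · exact le_refl _
  · exact gE_nonneg τ _

lemma select (W : Fin d → ℤ) (hW : ∀ j, 0 ≤ W j) :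
    ∀ r, r ≤ d → ∃ I : Finset (Fin d), I.card = r ∧
      (d : ℤ) * ∑ j ∈ I, W j ≤ (r : ℤ) * ∑ j, W j := by
  intro r
  induction r with
  | zero => intro _; exact ⟨∅, rfl, by simp⟩
  | succ r ih =>
    intro hrd
    obtain ⟨I, hc, hs⟩ := ih (le_trans (Nat.le_succ r) hrd)
    have hcompl_card : Iᶜ.card = d - r := by
      rw [Finset.card_compl, hc]
      simp
    have hne : Iᶜ.Nonempty := by
      rw [← Finset.card_pos, hcompl_card]
      omega
    obtain ⟨j0, hj0, hmin⟩ := Finset.exists_min_image Iᶜ W hne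
    have hj0I : j0 ∉ I := Finset.mem_compl.mp hj0
    have hsum_min : ((d - r : ℕ) : ℤ) * W j0 ≤ ∑ j ∈ Iᶜ, W j := by
      calc ((d - r : ℕ) : ℤ) * W j0 = (Iᶜ.card : ℤ) * W j0 := by rw [hcompl_card]
        _ = ∑ _j ∈ Iᶜ, W j0 := by rw [Finset.sum_const, nsmul_eq_mul]
        _ ≤ ∑ j ∈ Iᶜ, W j := Finset.sum_le_sum fun j hj => hmin j hj
    have hcompl_sum : ∑ j ∈ I, W j + ∑ j ∈ Iᶜ, W j = ∑ j, W j :=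
      Finset.sum_add_sum_compl I W
    refine ⟨insert j0 I, by rw [Finset.card_insert_of_notMem hj0I, hc], ?_⟩
    rw [Finset.sum_insert hj0I]
    set a := ∑ j ∈ I, W j with ha_def
    set b := ∑ j, W j with hb_def
    have ha : 0 ≤ a := Finset.sum_nonneg fun j _ => hW j
    have hb : 0 ≤ b := Finset.sum_nonneg fun j _ => hW j
    have hw0 : 0 ≤ W j0 := hW j0
    have hcast : ((d - r : ℕ) : ℤ) = (d : ℤ) - r := by
      have h' : r ≤ d := le_trans (Nat.le_succ r) hrd
      exact Nat.cast_sub h'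
    rw [hcast] at hsum_min
    have hdr : ((d : ℤ) - r) * W j0 ≤ b - a := by linarith
    have hrd' : (r : ℤ) + 1 ≤ (d : ℤ) := by exact_mod_cast hrd
    have hd0 : (0 : ℤ) ≤ (d : ℤ) := Int.natCast_nonneg d
    have hpos : (0 : ℤ) < (d : ℤ) - r := by linarith
    have m1 := mul_le_mul_of_nonneg_left hdr hd0
    have m2 := mul_le_mul_of_nonneg_left hs (by linarith : (0:ℤ) ≤ (d:ℤ) - r - 1)
    have key2 : ((d:ℤ) - r) * ((d:ℤ) * (W j0 + a)) ≤ ((d:ℤ) - r) * (((r:ℤ) + 1) * b) := by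
      nlinarith [m1, m2]
    have hfin := le_of_mul_le_mul_left key2 hpos
    have : ((r + 1 : ℕ) : ℤ) = (r : ℤ) + 1 := by push_cast; ring
    rw [this]
    exact hfin

end DF
namespace DF

open Function

variable {d : ℕ}

lemma key {τ : Base d → ℤ} (hτ : IsShift τ) (I : Finset (Fin d)) :
    ((TV (fine I τ) : ℝ) ≤ (TV τ : ℝ) + 4 * d * ∑ j ∈ I, (Wt τ j : ℝ)) ∧
    ((∑ᶠ v : Base d, (|fine I τ v - τ v| : ℝ)) ≤ 2 * ∑ j ∈ I, (Wt τ j : ℝ)) := by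
  classical
  set P : Finset (Base d) := (V0 hτ).image (cellPt I) with hP
  set V1 : Finset (Base d) := P.biUnion (fun c => cellFinset I c) with hV1
  have hPeven : ∀ c ∈ P, ∀ i ∈ I, 2 ∣ c i := by
    intro c hc i hi
    obtain ⟨v, _, rfl⟩ := Finset.mem_image.mp hc
    exact cellPt_even hi v
  have hV0V1 : V0 hτ ⊆ V1 := fun v hv =>
    Finset.mem_biUnion.mpr ⟨cellPt I v, Finset.mem_image_of_mem _ hv, mem_cellPt I v⟩
  have hcellPtP : ∀ v ∈ V1, cellPt I v ∈ P := by
    intro v hv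
    obtain ⟨c, hc, hvc⟩ := Finset.mem_biUnion.mp hv
    rwa [cellPt_eq_of_mem (hPeven c hc) hvc]
  have hτ0 : ∀ v, v ∉ V1 → τ v = 0 := by
    intro v hv
    by_contra h0
    exact hv (hV0V1 (mem_V0_of_ne hτ h0))
  have hcell0 : ∀ v, v ∉ V1 → ∀ w ∈ cellFinset I (cellPt I v), τ w = 0 := by
    intro v hv w hw
    by_contra h0
    have hwV0 : w ∈ V0 hτ := mem_V0_of_ne hτ h0
    have hcp : cellPt I w = cellPt I v :=
      cellPt_eq_of_mem (fun i hi => cellPt_even hi v) hw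
    refine hv (Finset.mem_biUnion.mpr ⟨cellPt I w, Finset.mem_image_of_mem _ hwV0, ?_⟩)
    rw [hcp]
    exact mem_cellPt I v
  -- the cell average and deviation
  set A : Base d → ℝ :=
    fun v => (∑ w ∈ cellFinset I (cellPt I v), (τ w : ℝ)) / 2 ^ I.card with hA
  have hfineA : ∀ v, fine I τ v = nearestInt (A v) := fun v => rfl
  have hA0 : ∀ v, v ∉ V1 → A v = 0 := by
    intro v hv
    rw [hA]
    simp only
    rw [Finset.sum_eq_zero, zero_div]
    intro w hw
    rw [hcell0 v hv w hw]
    norm_num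
  have hfine0 : ∀ v, v ∉ V1 → fine I τ v = 0 := by
    intro v hv
    rw [hfineA, hA0 v hv, nearestInt_zero]
  set φ : Base d → ℝ := fun v => |A v - (τ v : ℝ)| with hφ
  have hφnn : ∀ v, 0 ≤ φ v := fun v => abs_nonneg _
  have hφ0 : ∀ v, v ∉ V1 → φ v = 0 := by
    intro v hv
    rw [hφ]
    simp only
    rw [hA0 v hv, hτ0 v hv]
    norm_num
  -- vertex and edge index sets
  set V2 : Finset (Base d) :=
    V1 ∪ (Finset.univ ×ˢ V1).image (fun p : Fin d × Base d => p.2 - dlt p.1) with hV2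
  have hV1V2 : V1 ⊆ V2 := Finset.subset_union_left
  have hV0V2 : V0 hτ ⊆ V2 := hV0V1.trans hV1V2
  set E : Finset (Fin d × Base d) := Finset.univ ×ˢ V2 with hE
  -- fine is a shift with support in V1
  have hfshift : IsShift (fine I τ) := by
    apply Set.Finite.subset V1.finite_toSet
    intro v hv
    by_contra hnv
    exact hv (hfine0 v hnv)
  have hfV0 : V0 hfshift ⊆ V2 := by
    intro v hv
    rcases Finset.mem_union.mp hv with h | h
    · have : fine I τ v ≠ 0 := hfshift.mem_toFinset.mp h
      apply hV1V2
      by_contra hnv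
      exact this (hfine0 v hnv)
    · obtain ⟨p, hp, rfl⟩ := Finset.mem_image.mp h
      obtain ⟨_, hp2⟩ := Finset.mem_product.mp hp
      have : fine I τ p.2 ≠ 0 := hfshift.mem_toFinset.mp hp2
      have hmem : p.2 ∈ V1 := by
        by_contra hnv
        exact this (hfine0 p.2 hnv)
      apply Finset.mem_union_right
      exact Finset.mem_image.mpr ⟨p, Finset.mem_product.mpr ⟨Finset.mem_univ _, hmem⟩, rfl⟩
  -- finsum conversions
  have hTVτ : (TV τ : ℝ) = ∑ p ∈ E, (gE τ p : ℝ) := by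
    rw [TV_eq_sum hτ hV0V2]
    push_cast
    rfl
  have hTVF : (TV (fine I τ) : ℝ) = ∑ p ∈ E, (gE (fine I τ) p : ℝ) := by
    rw [TV_eq_sum hfshift hfV0]
    push_cast
    rfl
  have hL1 : (∑ᶠ v : Base d, (|fine I τ v - τ v| : ℝ))
      = ∑ v ∈ V2, |(fine I τ v : ℝ) - (τ v : ℝ)| := by
    have hsupp : Function.support (fun v => (|fine I τ v - τ v| : ℝ)) ⊆ ↑V2 := by
      intro v hv
      rw [Function.mem_support] at hv
      apply hV1V2
      by_contra hnv
      rw [hfine0 v hnv, hτ0 v hnv] at hv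
      simp at hv
    rw [finsum_eq_sum_of_support_subset _ hsupp]
  -- Φ and its cell-decomposition bound
  set Φ : ℝ := ∑ v ∈ V2, φ v with hΦdef
  have hΦnn : 0 ≤ Φ := Finset.sum_nonneg fun v _ => hφnn v
  have hWtcast : ∀ j, (Wt τ j : ℝ)
      = ∑ u ∈ V2, if Even (u j) then (gE τ (j, u) : ℝ) else 0 := by
    intro j
    rw [Wt_eq_sum hτ hV0V2 j]
    push_cast
    rfl
  have hΦW : Φ ≤ ∑ j ∈ I, (Wt τ j : ℝ) := by
    have hdisjP : (↑P : Set (Base d)).PairwiseDisjoint (fun c => cellFinset I c) := by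
      intro c hc c' hc' hne
      have : Disjoint (cellFinset I c) (cellFinset I c') := by
        rw [Finset.disjoint_left]
        intro u hu hu'
        exact hne ((cellPt_eq_of_mem (hPeven c (by exact_mod_cast hc)) hu).symm.trans
          (cellPt_eq_of_mem (hPeven c' (by exact_mod_cast hc')) hu'))
      exact this
    have step1 : Φ = ∑ v ∈ V1, φ v :=
      (Finset.sum_subset hV1V2 fun v _ hv => hφ0 v hv).symm
    have step2 : ∑ v ∈ V1, φ v = ∑ c ∈ P, ∑ v ∈ cellFinset I c, φ v :=
      Finset.sum_biUnion hdisjP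
    have step3 : ∀ c ∈ P, ∑ v ∈ cellFinset I c, φ v
        ≤ ∑ j ∈ I, ∑ u ∈ (cellFinset I c).filter (fun u => u j = c j),
            (gE τ (j, u) : ℝ) := by
      intro c hc
      set f : Base d → ℝ := fun v => (τ v : ℝ) with hf
      have hAc : ∀ v ∈ cellFinset I c,
          A v = (∑ w ∈ cellFinset I c, f w) / 2 ^ I.card := by
        intro v hv
        rw [hA]
        simp only
        rw [cellPt_eq_of_mem (hPeven c hc) hv]
      have hcard : ((cellFinset I c).card : ℝ) = 2 ^ I.card := by
        rw [card_cellFinset]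
        push_cast
        rfl
      have hb1 : ∀ v ∈ cellFinset I c,
          φ v ≤ (∑ w ∈ cellFinset I c, |f v - f w|) / 2 ^ I.card := by
        intro v hv
        rw [hφ]
        simp only
        rw [hAc v hv]
        have hnum : (∑ w ∈ cellFinset I c, f w) / 2 ^ I.card - (τ v : ℝ)
            = (∑ w ∈ cellFinset I c, (f w - f v)) / 2 ^ I.card := by
          rw [Finset.sum_sub_distrib, Finset.sum_const, nsmul_eq_mul, hcard]
          field_simp
          rfl
        rw [hnum, abs_div, abs_of_pos (by positivity : (0:ℝ) < 2 ^ I.card)]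
        apply div_le_div_of_nonneg_right ?_ (by positivity)
        calc |∑ w ∈ cellFinset I c, (f w - f v)| ≤ ∑ w ∈ cellFinset I c, |f w - f v| :=
              Finset.abs_sum_le_sum_abs _ _
          _ = ∑ w ∈ cellFinset I c, |f v - f w| :=
              Finset.sum_congr rfl fun w _ => abs_sub_comm _ _
      calc ∑ v ∈ cellFinset I c, φ v
          ≤ ∑ v ∈ cellFinset I c, (∑ w ∈ cellFinset I c, |f v - f w|) / 2 ^ I.card :=
            Finset.sum_le_sum hb1
        _ = (∑ v ∈ cellFinset I c, ∑ w ∈ cellFinset I c, |f v - f w|) / 2 ^ I.card :=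
            (Finset.sum_div _ _ _).symm
        _ ≤ (2 ^ I.card * ∑ j ∈ I, ∑ u ∈ (cellFinset I c).filter (fun u => u j = c j),
              |f (u + dlt j) - f u|) / 2 ^ I.card := by
            apply div_le_div_of_nonneg_right (cube_pairs I c f) ?_
            positivity
        _ = ∑ j ∈ I, ∑ u ∈ (cellFinset I c).filter (fun u => u j = c j),
              |f (u + dlt j) - f u| :=
            mul_div_cancel_left₀ _ (by positivity)
        _ = ∑ j ∈ I, ∑ u ∈ (cellFinset I c).filter (fun u => u j = c j),
              (gE τ (j, u) : ℝ) := by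
            refine Finset.sum_congr rfl fun j _ => Finset.sum_congr rfl fun u _ => ?_
            rw [hf, gE]
            push_cast
            rfl
    have step4 : ∑ c ∈ P, ∑ j ∈ I, ∑ u ∈ (cellFinset I c).filter (fun u => u j = c j),
        (gE τ (j, u) : ℝ) ≤ ∑ j ∈ I, (Wt τ j : ℝ) := by
      rw [Finset.sum_comm]
      refine Finset.sum_le_sum fun j hj => ?_
      have hdisjF : (↑P : Set (Base d)).PairwiseDisjoint
          (fun c => (cellFinset I c).filter (fun u => u j = c j)) := by
        intro c hc c' hc' hne
        exact (hdisjP hc hc' hne).mono (Finset.filter_subset _ _) (Finset.filter_subset _ _)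
      rw [← Finset.sum_biUnion hdisjF]
      have hsub : P.biUnion (fun c => (cellFinset I c).filter (fun u => u j = c j))
          ⊆ V2.filter (fun u => Even (u j)) := by
        intro u hu
        obtain ⟨c, hc, hu'⟩ := Finset.mem_biUnion.mp hu
        obtain ⟨hu1, hu2⟩ := Finset.mem_filter.mp hu'
        refine Finset.mem_filter.mpr ⟨hV1V2 (Finset.mem_biUnion.mpr ⟨c, hc, hu1⟩), ?_⟩
        rw [hu2]
        rcases hPeven c hc j hj with ⟨k, hk⟩
        exact ⟨k, by omega⟩
      calc ∑ u ∈ P.biUnion (fun c => (cellFinset I c).filter (fun u => u j = c j)),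
            (gE τ (j, u) : ℝ)
          ≤ ∑ u ∈ V2.filter (fun u => Even (u j)), (gE τ (j, u) : ℝ) :=
            Finset.sum_le_sum_of_subset_of_nonneg hsub
              (fun u _ _ => by exact_mod_cast gE_nonneg τ (j, u))
        _ = (Wt τ j : ℝ) := by
            rw [hWtcast j, Finset.sum_filter]
    calc Φ = ∑ c ∈ P, ∑ v ∈ cellFinset I c, φ v := step1.trans step2
      _ ≤ ∑ c ∈ P, ∑ j ∈ I, ∑ u ∈ (cellFinset I c).filter (fun u => u j = c j),
            (gE τ (j, u) : ℝ) := Finset.sum_le_sum step3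
      _ ≤ ∑ j ∈ I, (Wt τ j : ℝ) := step4
  -- ℓ¹ bound
  have hl1b : (∑ᶠ v : Base d, (|fine I τ v - τ v| : ℝ)) ≤ 2 * Φ := by
    rw [hL1, hΦdef, Finset.mul_sum]
    refine Finset.sum_le_sum fun v _ => ?_
    rw [hfineA v]
    exact abs_nearestInt_sub_int (A v) (τ v)
  -- TV bound
  have htvb : (TV (fine I τ) : ℝ) ≤ (TV τ : ℝ) + 4 * d * Φ := by
    have hterm : ∀ p ∈ E, (gE (fine I τ) p : ℝ)
        ≤ (gE τ p : ℝ) + 2 * φ p.2 + 2 * φ (p.2 + dlt p.1) := by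
      rintro ⟨j, u⟩ _
      have hcast : (gE (fine I τ) (j, u) : ℝ)
          = |(fine I τ (u + dlt j) : ℝ) - (fine I τ u : ℝ)| := by
        rw [gE]; push_cast; rfl
      have hcast2 : (gE τ (j, u) : ℝ) = |(τ (u + dlt j) : ℝ) - (τ u : ℝ)| := by
        rw [gE]; push_cast; rfl
      rw [hcast, hcast2]
      have t1 : |(fine I τ (u + dlt j) : ℝ) - (τ (u + dlt j) : ℝ)|
          ≤ 2 * φ (u + dlt j) := by
        rw [hfineA, hφ]
        exact abs_nearestInt_sub_int _ _
      have t2 : |(fine I τ u : ℝ) - (τ u : ℝ)| ≤ 2 * φ u := by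
        rw [hfineA, hφ]
        exact abs_nearestInt_sub_int _ _
      have tri : |(fine I τ (u + dlt j) : ℝ) - (fine I τ u : ℝ)|
          ≤ |(fine I τ (u + dlt j) : ℝ) - (τ (u + dlt j) : ℝ)|
            + |(τ (u + dlt j) : ℝ) - (τ u : ℝ)|
            + |(τ u : ℝ) - (fine I τ u : ℝ)| := by
        have a1 := abs_sub_le ((fine I τ (u + dlt j) : ℝ)) ((τ (u + dlt j) : ℝ))
          ((fine I τ u : ℝ))
        have a2 := abs_sub_le ((τ (u + dlt j) : ℝ)) ((τ u : ℝ)) ((fine I τ u : ℝ))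
        linarith
      have t2' : |(τ u : ℝ) - (fine I τ u : ℝ)| ≤ 2 * φ u := by
        rw [abs_sub_comm]
        exact t2
      linarith
    have hsum1 : ∑ p ∈ E, φ p.2 = (d : ℝ) * Φ := by
      rw [hE, Finset.sum_product]
      have hinner : ∀ j : Fin d, ∑ u ∈ V2, φ ((j, u).2) = Φ := fun j => rfl
      rw [Finset.sum_congr rfl fun j _ => hinner j, Finset.sum_const, nsmul_eq_mul,
        Finset.card_univ, Fintype.card_fin]
    have hsum2 : ∑ p ∈ E, φ (p.2 + dlt p.1) ≤ (d : ℝ) * Φ := by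
      rw [hE, Finset.sum_product]
      have hper : ∀ j : Fin d, ∑ u ∈ V2, φ (u + dlt j) ≤ Φ := by
        intro j
        have himg : ∑ u ∈ V2, φ (u + dlt j)
            = ∑ w ∈ V2.image (· + dlt j), φ w :=
          (Finset.sum_image fun a _ b _ hab => add_left_injective _ hab).symm
        rw [himg, hΦdef]
        refine sum_le_sum_support φ hφnn fun w hw => ?_
        apply hV1V2
        by_contra hnw
        exact hw (hφ0 w hnw)
      refine le_trans (Finset.sum_le_sum fun j (_ : j ∈ Finset.univ) => hper j) ?_
      rw [Finset.sum_const, nsmul_eq_mul, Finset.card_univ, Fintype.card_fin]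
    calc (TV (fine I τ) : ℝ) = ∑ p ∈ E, (gE (fine I τ) p : ℝ) := hTVF
      _ ≤ ∑ p ∈ E, ((gE τ p : ℝ) + 2 * φ p.2 + 2 * φ (p.2 + dlt p.1)) :=
          Finset.sum_le_sum hterm
      _ = ∑ p ∈ E, (gE τ p : ℝ) + 2 * ∑ p ∈ E, φ p.2
          + 2 * ∑ p ∈ E, φ (p.2 + dlt p.1) := by
          rw [Finset.sum_add_distrib, Finset.sum_add_distrib, Finset.mul_sum, Finset.mul_sum]
      _ ≤ (TV τ : ℝ) + 2 * ((d:ℝ) * Φ) + 2 * ((d:ℝ) * Φ) := by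
          rw [← hTVτ, hsum1]
          have := hsum2
          nlinarith [this]
      _ = (TV τ : ℝ) + 4 * d * Φ := by ring
  constructor
  · calc (TV (fine I τ) : ℝ) ≤ (TV τ : ℝ) + 4 * d * Φ := htvb
      _ ≤ (TV τ : ℝ) + 4 * d * ∑ j ∈ I, (Wt τ j : ℝ) := by
          have hd : (0:ℝ) ≤ 4 * d := by positivity
          nlinarith [hΦW, hd]
  · calc (∑ᶠ v : Base d, (|fine I τ v - τ v| : ℝ)) ≤ 2 * Φ := hl1b
      _ ≤ 2 * ∑ j ∈ I, (Wt τ j : ℝ) := by linarith [hΦW]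

end DF

/-- For every shift `τ` and every `0 ≤ r ≤ d` there is a set
`I ⊆ [d]` with `|I| = r` compatible with `τ`, i.e., with
`TV(τ_I) ≤ 20(2|I|+1) TV(τ)` and `‖τ_I − τ‖₁ ≤ (4|I|/d) TV(τ)`. -/
theorem exists_compatible_fine_graining
    (d : ℕ) (hd : 1 ≤ d) (τ : Base d → ℤ) (hτ : IsShift τ) (r : ℕ) (hr : r ≤ d) :
    ∃ I : Finset (Fin d), I.card = r ∧
      TV (fine I τ) ≤ 20 * (2 * (r : ℤ) + 1) * TV τ ∧
      (∑ᶠ v : Base d, (|fine I τ v - τ v| : ℝ)) ≤ 4 * (r : ℝ) / (d : ℝ) * (TV τ : ℝ) := by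

  classical
  obtain ⟨I, hIcard, hIsel⟩ := select (Wt τ) (Wt_nonneg τ) r hr
  obtain ⟨htv, hl1⟩ := key hτ I
  have hWT : ∑ j, Wt τ j ≤ TV τ := sumWt_le_TV hτ
  have hTV0 : (0:ℤ) ≤ TV τ := TV_nonneg τ
  have hIW0 : (0:ℤ) ≤ ∑ j ∈ I, Wt τ j := Finset.sum_nonneg fun j _ => Wt_nonneg τ j
  have hsel2 : (d:ℤ) * ∑ j ∈ I, Wt τ j ≤ (r:ℤ) * TV τ :=
    le_trans hIsel (mul_le_mul_of_nonneg_left hWT (Int.natCast_nonneg r))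
  have hselR : (d:ℝ) * ∑ j ∈ I, (Wt τ j : ℝ) ≤ (r:ℝ) * (TV τ : ℝ) := by
    exact_mod_cast hsel2
  have hIW0R : (0:ℝ) ≤ ∑ j ∈ I, (Wt τ j : ℝ) := by exact_mod_cast hIW0
  have hTV0R : (0:ℝ) ≤ (TV τ : ℝ) := by exact_mod_cast hTV0
  have hrreal : (0:ℝ) ≤ (r:ℝ) := Nat.cast_nonneg r
  have hd0 : (0:ℝ) < (d:ℝ) := by exact_mod_cast hd
  refine ⟨I, hIcard, ?_, ?_⟩
  · have h4 : 4 * (d:ℝ) * ∑ j ∈ I, (Wt τ j : ℝ) ≤ 4 * (r:ℝ) * (TV τ:ℝ) := by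
      nlinarith [hselR]
    have hfinal : (TV (fine I τ) : ℝ) ≤ 20 * (2 * (r:ℝ) + 1) * (TV τ : ℝ) := by
      nlinarith [htv, h4, hTV0R, hrreal, mul_nonneg hrreal hTV0R]
    exact_mod_cast hfinal
  · rw [div_mul_eq_mul_div, le_div_iff₀ hd0]
    have h1 : (∑ᶠ v : Base d, (|fine I τ v - τ v| : ℝ)) * d
        ≤ (2 * ∑ j ∈ I, (Wt τ j : ℝ)) * d :=
      mul_le_mul_of_nonneg_right hl1 (le_of_lt hd0)
    nlinarith [h1, hselR, hTV0R, hrreal, mul_nonneg hrreal hTV0R]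
end
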